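/- arXiv:1401.8027 — 5 statements merged into one kernel-verified Lean document; each statement's English description precedes it below -/
import Mathlib

section
/- Let q be a complex number with |q| < 1. Then ∏_{n=1}^∞ 1/((1−q^{6n−1})(1−q^{6n−5})) = ∏_{n=1}^∞ (1+q^n)/(1+q^{3n}). -/
open scoped BigOperators Classical

namespace SchurAux

variable {q : ℂ}

lemma pow_norm_lt (hq : ‖q‖ < 1) {m : ℕ} (hm : m ≠ 0) : ‖q ^ m‖ < 1 := by
  rw [norm_pow]
  exact pow_lt_one₀ (norm_nonneg q) hq hm

lemma one_sub_ne (hq : ‖q‖ < 1) {m : ℕ} (hm : m ≠ 0) : 1 - q ^ m ≠ 0 := by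
  intro h
  have h2 : q ^ m = 1 := by linear_combination -h
  have := pow_norm_lt hq hm
  rw [h2] at this
  simp at this

lemma one_add_ne (hq : ‖q‖ < 1) {m : ℕ} (hm : m ≠ 0) : 1 + q ^ m ≠ 0 := by
  intro h
  have h2 : q ^ m = -1 := by linear_combination h
  have := pow_norm_lt hq hm
  rw [h2] at this
  simp at this

lemma multipliable_aux {f : ℕ → ℂ} (h0 : ∀ n, f n ≠ 0)
    (hs : Summable fun n => ‖f n - 1‖) : Multipliable f := by
  have hlog : Summable fun n => Complex.log (f n) := by
    apply Summable.of_norm_bounded_eventually_nat (g := fun n => 3 / 2 * ‖f n - 1‖)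
      (hs.mul_left _)
    have ht : Filter.Tendsto (fun n => ‖f n - 1‖) Filter.atTop (nhds 0) :=
      hs.tendsto_atTop_zero
    filter_upwards [ht.eventually_le_const (by norm_num : (0 : ℝ) < 1 / 2)] with n hn
    have hfn : f n = 1 + (f n - 1) := by ring
    have h2 := Complex.norm_log_one_add_half_le_self hn
    rw [← hfn] at h2
    exact h2
  exact Complex.multipliable_of_summable_log hlog

/-- indicator-style factor `1 - q^m` on a set -/
noncomputable def uu (q : ℂ) (P : ℕ → Prop) (m : ℕ) : ℂ := if P m then 1 - q ^ m else 1

/-- indicator-style factor `(1 - q^m)⁻¹` on a set -/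
noncomputable def vv (q : ℂ) (P : ℕ → Prop) (m : ℕ) : ℂ := if P m then (1 - q ^ m)⁻¹ else 1

lemma uu_ne (hq : ‖q‖ < 1) {P : ℕ → Prop} (hP0 : ¬ P 0) (m : ℕ) : uu q P m ≠ 0 := by
  unfold uu
  split_ifs with h
  · exact one_sub_ne hq (by rintro rfl; exact hP0 h)
  · exact one_ne_zero

lemma vv_ne (hq : ‖q‖ < 1) {P : ℕ → Prop} (hP0 : ¬ P 0) (m : ℕ) : vv q P m ≠ 0 := by
  unfold vv
  split_ifs with h
  · exact inv_ne_zero (one_sub_ne hq (by rintro rfl; exact hP0 h))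
  · exact one_ne_zero

lemma mult_uu (hq : ‖q‖ < 1) {P : ℕ → Prop} (hP0 : ¬ P 0) : Multipliable (uu q P) := by
  apply multipliable_aux (uu_ne hq hP0)
  apply Summable.of_nonneg_of_le (fun _ => norm_nonneg _) (f := fun m => ‖q‖ ^ m)
  · intro m
    unfold uu
    split_ifs with h
    · simp [norm_pow]
    · simp [pow_nonneg (norm_nonneg q)]
  · exact summable_geometric_of_lt_one (norm_nonneg q) hq

lemma mult_vv (hq : ‖q‖ < 1) {P : ℕ → Prop} (hP0 : ¬ P 0) : Multipliable (vv q P) := by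
  apply multipliable_aux (vv_ne hq hP0)
  apply Summable.of_nonneg_of_le (fun _ => norm_nonneg _)
    (f := fun m => (1 - ‖q‖)⁻¹ * ‖q‖ ^ m)
  · intro m
    have hq1 : (0 : ℝ) < 1 - ‖q‖ := by linarith
    unfold vv
    split_ifs with h
    · have hm : m ≠ 0 := by rintro rfl; exact hP0 h
      have hne := one_sub_ne hq hm
      have heq : (1 - q ^ m)⁻¹ - 1 = q ^ m * (1 - q ^ m)⁻¹ := by
        field_simp
        ring
      rw [heq, norm_mul, norm_inv, norm_pow]
      have hlow : 1 - ‖q‖ ≤ ‖1 - q ^ m‖ := by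
        have h1 := norm_sub_norm_le (1 : ℂ) (q ^ m)
        have h2 : ‖q ^ m‖ ≤ ‖q‖ := by
          rw [norm_pow]
          exact pow_le_of_le_one (norm_nonneg q) hq.le hm
        simp only [norm_one] at h1
        linarith
      have hinv : ‖1 - q ^ m‖⁻¹ ≤ (1 - ‖q‖)⁻¹ :=
        inv_anti₀ hq1 hlow
      calc ‖q‖ ^ m * ‖1 - q ^ m‖⁻¹ ≤ ‖q‖ ^ m * (1 - ‖q‖)⁻¹ := by
            exact mul_le_mul_of_nonneg_left hinv (pow_nonneg (norm_nonneg q) m)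
        _ = (1 - ‖q‖)⁻¹ * ‖q‖ ^ m := by ring
    · simp
      positivity
  · exact (summable_geometric_of_lt_one (norm_nonneg q) hq).mul_left _

lemma uu_mul_vv (hq : ‖q‖ < 1) {P : ℕ → Prop} (hP0 : ¬ P 0) :
    (∏' m, uu q P m) * (∏' m, vv q P m) = 1 := by
  rw [← Multipliable.tprod_mul (mult_uu hq hP0) (mult_vv hq hP0)]
  have : (fun m => uu q P m * vv q P m) = fun _ => (1 : ℂ) := by
    funext m
    unfold uu vv
    split_ifs with h
    · exact mul_inv_cancel₀ (one_sub_ne hq (by rintro rfl; exact hP0 h))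
    · exact one_mul 1
  rw [this]
  exact tprod_one

lemma reindex {f : ℕ → ℂ} {P : ℕ → Prop} (h1 : ∀ m, ¬ P m → f m = 1)
    {j : ℕ → ℕ} (hj : Function.Injective j) (hr : ∀ m, P m → ∃ n, j n = m) :
    ∏' n, f (j n) = ∏' m, f m := by
  apply hj.tprod_eq
  intro m hm
  by_contra h
  have hPm : P m := by
    by_contra hP
    exact hm (h1 m hP)
  exact h (hr m hPm)

lemma reindex_mult {f : ℕ → ℂ} {P : ℕ → Prop} (h1 : ∀ m, ¬ P m → f m = 1)
    {j : ℕ → ℕ} (hj : Function.Injective j) (hr : ∀ m, P m → ∃ n, j n = m)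
    (hf : Multipliable f) : Multipliable (fun n => f (j n)) := by
  refine (hj.multipliable_iff ?_).2 hf
  intro x hx
  apply h1
  intro hP
  exact hx (hr x hP)

lemma factor_eq (x : ℂ) (hx1 : 1 - x ≠ 0) (hx6 : 1 - x ^ 6 ≠ 0) (hx3 : 1 + x ^ 3 ≠ 0) :
    (1 + x) / (1 + x ^ 3) = (1 - x ^ 2) * (1 - x ^ 3) * ((1 - x)⁻¹ * (1 - x ^ 6)⁻¹) := by
  field_simp
  ring

def PA (m : ℕ) : Prop := m ≠ 0
def PE (m : ℕ) : Prop := m % 2 = 0 ∧ m ≠ 0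
def PT (m : ℕ) : Prop := m % 3 = 0 ∧ m ≠ 0
def PX (m : ℕ) : Prop := m % 6 = 0 ∧ m ≠ 0
def P1 (m : ℕ) : Prop := m % 6 = 1
def P5 (m : ℕ) : Prop := m % 6 = 5

lemma pointwise (q : ℂ) (m : ℕ) :
    uu q PA m * uu q PX m = uu q PE m * uu q PT m * (uu q P5 m * uu q P1 m) := by
  unfold uu PA PE PT PX P1 P5
  split_ifs <;> first | ring1 | (exfalso; omega)

end SchurAux

/-- Schur's identity: for `|q| < 1`,
`∏_{n≥1} 1/((1-q^{6n-1})(1-q^{6n-5})) = ∏_{n≥1} (1+q^n)/(1+q^{3n})`. -/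
theorem stmt_4 (q : ℂ) (hq : ‖q‖ < 1) :
    (∏' n : ℕ, 1 / ((1 - q ^ (6 * (n + 1) - 1)) * (1 - q ^ (6 * (n + 1) - 5)))) =
      ∏' n : ℕ, (1 + q ^ (n + 1)) / (1 + q ^ (3 * (n + 1))) := by
  open SchurAux in
  have hA0 : ¬ PA 0 := by simp [PA]
  have hE0 : ¬ PE 0 := by simp [PE]
  have hT0 : ¬ PT 0 := by simp [PT]
  have hX0 : ¬ PX 0 := by simp [PX]
  have h10 : ¬ P1 0 := by simp [P1]
  have h50 : ¬ P5 0 := by simp [P5]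
  have mUA := mult_uu hq hA0
  have mUE := mult_uu hq hE0
  have mUT := mult_uu hq hT0
  have mUX := mult_uu hq hX0
  have mU1 := mult_uu hq h10
  have mU5 := mult_uu hq h50
  have mVA := mult_vv hq hA0
  have mVX := mult_vv hq hX0
  have mV1 := mult_vv hq h10
  have mV5 := mult_vv hq h50
  -- off-set values are 1
  have u_offE : ∀ m, ¬ PE m → uu q PE m = 1 := fun m h => if_neg h
  have u_offT : ∀ m, ¬ PT m → uu q PT m = 1 := fun m h => if_neg h
  have v_offA : ∀ m, ¬ PA m → vv q PA m = 1 := fun m h => if_neg h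
  have v_offX : ∀ m, ¬ PX m → vv q PX m = 1 := fun m h => if_neg h
  have v_off1 : ∀ m, ¬ P1 m → vv q P1 m = 1 := fun m h => if_neg h
  have v_off5 : ∀ m, ¬ P5 m → vv q P5 m = 1 := fun m h => if_neg h
  -- injections and ranges
  have injA : Function.Injective (fun n : ℕ => n + 1) := fun a b h => by
    have h' : a + 1 = b + 1 := h; omega
  have injE : Function.Injective (fun n : ℕ => 2 * n + 2) := fun a b h => by
    simp only at h; omega
  have injT : Function.Injective (fun n : ℕ => 3 * n + 3) := fun a b h => by
    simp only at h; omega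
  have injX : Function.Injective (fun n : ℕ => 6 * n + 6) := fun a b h => by
    simp only at h; omega
  have inj1 : Function.Injective (fun n : ℕ => 6 * n + 1) := fun a b h => by
    simp only at h; omega
  have inj5 : Function.Injective (fun n : ℕ => 6 * n + 5) := fun a b h => by
    simp only at h; omega
  have hrA : ∀ m, PA m → ∃ n, (fun n : ℕ => n + 1) n = m := by
    intro m hm; refine ⟨m - 1, ?_⟩; unfold PA at hm; show m - 1 + 1 = m; omega
  have hrE : ∀ m, PE m → ∃ n, (fun n : ℕ => 2 * n + 2) n = m := by
    intro m hm; refine ⟨m / 2 - 1, ?_⟩; unfold PE at hm; show 2 * (m / 2 - 1) + 2 = m; omega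
  have hrT : ∀ m, PT m → ∃ n, (fun n : ℕ => 3 * n + 3) n = m := by
    intro m hm; refine ⟨m / 3 - 1, ?_⟩; unfold PT at hm; show 3 * (m / 3 - 1) + 3 = m; omega
  have hrX : ∀ m, PX m → ∃ n, (fun n : ℕ => 6 * n + 6) n = m := by
    intro m hm; refine ⟨m / 6 - 1, ?_⟩; unfold PX at hm; show 6 * (m / 6 - 1) + 6 = m; omega
  have hr1 : ∀ m, P1 m → ∃ n, (fun n : ℕ => 6 * n + 1) n = m := by
    intro m hm; refine ⟨m / 6, ?_⟩; unfold P1 at hm; show 6 * (m / 6) + 1 = m; omega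
  have hr5 : ∀ m, P5 m → ∃ n, (fun n : ℕ => 6 * n + 5) n = m := by
    intro m hm; refine ⟨m / 6, ?_⟩; unfold P5 at hm; show 6 * (m / 6) + 5 = m; omega
  -- LHS
  have hL : (∏' n : ℕ, 1 / ((1 - q ^ (6 * (n + 1) - 1)) * (1 - q ^ (6 * (n + 1) - 5))))
      = (∏' m, vv q P5 m) * (∏' m, vv q P1 m) := by
    have e : (fun n : ℕ => 1 / ((1 - q ^ (6 * (n + 1) - 1)) * (1 - q ^ (6 * (n + 1) - 5))))
        = fun n => vv q P5 (6 * n + 5) * vv q P1 (6 * n + 1) := by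
      funext n
      have e1 : 6 * (n + 1) - 1 = 6 * n + 5 := by omega
      have e2 : 6 * (n + 1) - 5 = 6 * n + 1 := by omega
      rw [e1, e2]
      unfold vv
      rw [if_pos (show P5 (6 * n + 5) by unfold P5; omega),
        if_pos (show P1 (6 * n + 1) by unfold P1; omega), one_div, mul_inv]
    rw [e, Multipliable.tprod_mul (reindex_mult v_off5 inj5 hr5 mV5) (reindex_mult v_off1 inj1 hr1 mV1),
      reindex v_off5 inj5 hr5, reindex v_off1 inj1 hr1]
  -- RHS
  have hR : (∏' n : ℕ, (1 + q ^ (n + 1)) / (1 + q ^ (3 * (n + 1))))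
      = (∏' m, uu q PE m) * (∏' m, uu q PT m) * ((∏' m, vv q PA m) * (∏' m, vv q PX m)) := by
    have e : (fun n : ℕ => (1 + q ^ (n + 1)) / (1 + q ^ (3 * (n + 1))))
        = fun n => uu q PE (2 * n + 2) * uu q PT (3 * n + 3)
            * (vv q PA (n + 1) * vv q PX (6 * n + 6)) := by
      funext n
      unfold uu vv
      rw [if_pos (show PE (2 * n + 2) by unfold PE; omega),
        if_pos (show PT (3 * n + 3) by unfold PT; omega),
        if_pos (show PA (n + 1) by unfold PA; omega),
        if_pos (show PX (6 * n + 6) by unfold PX; omega)]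
      have hx2 : q ^ (2 * n + 2) = (q ^ (n + 1)) ^ 2 := by
        rw [← pow_mul]; congr 1; omega
      have hx3 : q ^ (3 * n + 3) = (q ^ (n + 1)) ^ 3 := by
        rw [← pow_mul]; congr 1; omega
      have hx3' : q ^ (3 * (n + 1)) = (q ^ (n + 1)) ^ 3 := by
        rw [← pow_mul]; congr 1; omega
      have hx6 : q ^ (6 * n + 6) = (q ^ (n + 1)) ^ 6 := by
        rw [← pow_mul]; congr 1; omega
      have hne6 : 1 - (q ^ (n + 1)) ^ 6 ≠ 0 := by
        rw [← hx6]; exact one_sub_ne hq (by omega)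
      have hne3 : 1 + (q ^ (n + 1)) ^ 3 ≠ 0 := by
        rw [← hx3']; exact one_add_ne hq (by positivity)
      rw [hx2, hx3, hx3', hx6]
      exact factor_eq (q ^ (n + 1)) (one_sub_ne hq (by omega)) hne6 hne3
    rw [e, Multipliable.tprod_mul
        ((reindex_mult u_offE injE hrE mUE).mul (reindex_mult u_offT injT hrT mUT))
        ((reindex_mult v_offA injA hrA mVA).mul (reindex_mult v_offX injX hrX mVX)),
      Multipliable.tprod_mul (reindex_mult u_offE injE hrE mUE) (reindex_mult u_offT injT hrT mUT),
      Multipliable.tprod_mul (reindex_mult v_offA injA hrA mVA) (reindex_mult v_offX injX hrX mVX),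
      reindex u_offE injE hrE, reindex u_offT injT hrT,
      reindex v_offA injA hrA, reindex v_offX injX hrX]
  -- key product identity
  have hkey : (∏' m, uu q PA m) * (∏' m, uu q PX m)
      = (∏' m, uu q PE m) * (∏' m, uu q PT m) * ((∏' m, uu q P5 m) * (∏' m, uu q P1 m)) := by
    calc (∏' m, uu q PA m) * (∏' m, uu q PX m)
        = ∏' m, (uu q PA m * uu q PX m) := (Multipliable.tprod_mul mUA mUX).symm
      _ = ∏' m, (uu q PE m * uu q PT m * (uu q P5 m * uu q P1 m)) :=
          tprod_congr (pointwise q)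
      _ = _ := by
          rw [Multipliable.tprod_mul (mUE.mul mUT) (mU5.mul mU1), Multipliable.tprod_mul mUE mUT, Multipliable.tprod_mul mU5 mU1]
  -- conclude
  rw [hL, hR]
  have iA := uu_mul_vv hq hA0
  have iX := uu_mul_vv hq hX0
  have i1 := uu_mul_vv hq h10
  have i5 := uu_mul_vv hq h50
  have eA : (∏' m, vv q PA m) = (∏' m, uu q PA m)⁻¹ := (inv_eq_of_mul_eq_one_right iA).symm
  have eX : (∏' m, vv q PX m) = (∏' m, uu q PX m)⁻¹ := (inv_eq_of_mul_eq_one_right iX).symm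
  have e1 : (∏' m, vv q P1 m) = (∏' m, uu q P1 m)⁻¹ := (inv_eq_of_mul_eq_one_right i1).symm
  have e5 : (∏' m, vv q P5 m) = (∏' m, uu q P5 m)⁻¹ := (inv_eq_of_mul_eq_one_right i5).symm
  have nA : (∏' m, uu q PA m) ≠ 0 := left_ne_zero_of_mul_eq_one iA
  have nX : (∏' m, uu q PX m) ≠ 0 := left_ne_zero_of_mul_eq_one iX
  have n1 : (∏' m, uu q P1 m) ≠ 0 := left_ne_zero_of_mul_eq_one i1
  have n5 : (∏' m, uu q P5 m) ≠ 0 := left_ne_zero_of_mul_eq_one i5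
  rw [eA, eX, e1, e5]
  field_simp
  linear_combination hkey
end

section
/- For every positive integer n, the number of partitions of n into parts congruent to ±1 modulo 6 equals the number of partitions of n into distinct parts congruent to ±1 modulo 3. (That is, the number of finite multisets of positive integers, each element congruent to 1 or 5 modulo 6, with sum n, equals the number of finite sets of positive integers, each element congruent to 1 or 2 modulo 3, with sum n.) -/
open scoped BigOperators


namespace Glaisher

/-- Split each element `s = 2^k * a` (with `a` odd) into `2^k` copies of `a`. -/
def f (S : Finset ℕ) : Multiset ℕ :=
  S.val.bind (fun s => Multiset.replicate (2 ^ (s.factorization 2)) (ordCompl[2] s))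

/-- Merge: for each distinct part `a` with multiplicity `m`, produce parts `2^k * a`
for `k` in the binary expansion of `m`. -/
def g (μ : Multiset ℕ) : Finset ℕ :=
  μ.toFinset.biUnion (fun a =>
    ((μ.count a).bitIndices.toFinset).image (fun k => 2 ^ k * a))

lemma val2_pow_mul (k a : ℕ) (ha : ¬ 2 ∣ a) : ((2 ^ k * a).factorization 2) = k := by
  have ha0 : a ≠ 0 := by rintro rfl; exact ha ⟨0, rfl⟩
  rw [Nat.factorization_mul (pow_ne_zero _ two_ne_zero) ha0]
  simp [Nat.Prime.factorization_pow, Nat.factorization_eq_zero_of_not_dvd ha, Nat.Prime.factorization, Nat.prime_two]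

lemma oddPart_pow_mul (k a : ℕ) (ha : ¬ 2 ∣ a) : ordCompl[2] (2 ^ k * a) = a := by
  rw [val2_pow_mul k a ha, Nat.mul_div_cancel_left _ (pow_pos two_pos k)]

lemma sum_f (S : Finset ℕ) : (f S).sum = ∑ s ∈ S, s := by
  rw [f, Multiset.sum_bind]
  simp only [Multiset.sum_replicate, smul_eq_mul, Nat.ordProj_mul_ordCompl_eq_self]
  rfl

lemma count_f (S : Finset ℕ) (b : ℕ) :
    (f S).count b = ∑ s ∈ S, if ordCompl[2] s = b then 2 ^ (s.factorization 2) else 0 := by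
  rw [f, Multiset.count_bind]
  simp only [Multiset.count_replicate]
  rfl

end Glaisher

namespace Glaisher

lemma mem_f {S : Finset ℕ} {m : ℕ} : m ∈ f S ↔ ∃ s ∈ S, ordCompl[2] s = m := by
  simp only [f, Multiset.mem_bind, Multiset.mem_replicate]
  constructor
  · rintro ⟨a, ha, -, rfl⟩; exact ⟨a, ha, rfl⟩
  · rintro ⟨s, hs, rfl⟩
    exact ⟨s, hs, pow_ne_zero _ two_ne_zero, rfl⟩

lemma count_f' {S : Finset ℕ} (hS : ∀ s ∈ S, s ≠ 0) (b : ℕ) :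
    (f S).count b =
      ∑ k ∈ (S.filter (fun s => ordCompl[2] s = b)).image (fun s => s.factorization 2),
        2 ^ k := by
  rw [count_f, Finset.sum_ite, Finset.sum_const_zero, add_zero, Finset.sum_image]
  intro s hs t ht hst
  have hsF := Finset.mem_filter.1 hs
  have htF := Finset.mem_filter.1 ht
  have h1 : s = 2 ^ (s.factorization 2) * b := by
    rw [← hsF.2, Nat.ordProj_mul_ordCompl_eq_self]
  have h2 : t = 2 ^ (t.factorization 2) * b := by
    rw [← htF.2, Nat.ordProj_mul_ordCompl_eq_self]
  rw [h1, h2, show s.factorization 2 = t.factorization 2 from hst]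

lemma g_f {S : Finset ℕ} (hS : ∀ s ∈ S, s ≠ 0) : g (f S) = S := by
  ext t
  simp only [g, Finset.mem_biUnion, Finset.mem_image, Multiset.mem_toFinset, mem_f]
  constructor
  · rintro ⟨a, ⟨s₀, hs₀, rfl⟩, k, hk, rfl⟩
    rw [count_f' hS, Finset.toFinset_bitIndices_twoPowSum, Finset.mem_image] at hk
    obtain ⟨s, hs, rfl⟩ := hk
    have hsF := Finset.mem_filter.1 hs
    rw [← hsF.2, Nat.ordProj_mul_ordCompl_eq_self]
    exact hsF.1
  · intro ht
    refine ⟨ordCompl[2] t, ⟨t, ht, rfl⟩, t.factorization 2, ?_, ?_⟩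
    · rw [count_f' hS, Finset.toFinset_bitIndices_twoPowSum, Finset.mem_image]
      exact ⟨t, Finset.mem_filter.2 ⟨ht, rfl⟩, rfl⟩
    · rw [Nat.ordProj_mul_ordCompl_eq_self]

end Glaisher

namespace Glaisher

lemma mem_g {μ : Multiset ℕ} {t : ℕ} :
    t ∈ g μ ↔ ∃ a ∈ μ, ∃ k ∈ (μ.count a).bitIndices, t = 2 ^ k * a := by
  simp only [g, Finset.mem_biUnion, Finset.mem_image, Multiset.mem_toFinset,
    List.mem_toFinset]
  constructor
  · rintro ⟨a, ha, k, hk, rfl⟩; exact ⟨a, ha, k, hk, rfl⟩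
  · rintro ⟨a, ha, k, hk, rfl⟩; exact ⟨a, ha, k, hk, rfl⟩

lemma f_g {μ : Multiset ℕ} (hμ : ∀ a ∈ μ, ¬ 2 ∣ a) : f (g μ) = μ := by
  ext b
  have hdisj : (↑μ.toFinset : Set ℕ).PairwiseDisjoint
      (fun a => ((μ.count a).bitIndices.toFinset).image (fun k => 2 ^ k * a)) := by
    intro a₁ h₁ a₂ h₂ hne
    simp only [Function.onFun]
    rw [Finset.disjoint_left]
    rintro x hx₁ hx₂
    obtain ⟨k, -, rfl⟩ := Finset.mem_image.1 hx₁
    obtain ⟨j, -, hj⟩ := Finset.mem_image.1 hx₂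
    have e1 := oddPart_pow_mul k a₁ (hμ a₁ (Multiset.mem_toFinset.1 h₁))
    have e2 := oddPart_pow_mul j a₂ (hμ a₂ (Multiset.mem_toFinset.1 h₂))
    exact hne (by rw [← e1, ← hj, e2])
  rw [count_f, g, Finset.sum_biUnion hdisj]
  have hstep : ∀ a ∈ μ.toFinset,
      (∑ s ∈ ((μ.count a).bitIndices.toFinset).image (fun k => 2 ^ k * a),
        if ordCompl[2] s = b then 2 ^ (s.factorization 2) else 0)
      = if a = b then μ.count a else 0 := by
    intro a ha
    have hodd := hμ a (Multiset.mem_toFinset.1 ha)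
    have ha0 : a ≠ 0 := by rintro rfl; exact hodd ⟨0, rfl⟩
    rw [Finset.sum_image]
    · have : ∀ k ∈ (μ.count a).bitIndices.toFinset,
          (if ordCompl[2] (2 ^ k * a) = b then 2 ^ ((2 ^ k * a).factorization 2) else 0)
          = if a = b then 2 ^ k else 0 := by
        intro k _
        rw [oddPart_pow_mul k a hodd, val2_pow_mul k a hodd]
      rw [Finset.sum_congr rfl this]
      by_cases hab : a = b
      · simp [hab, Finset.twoPowSum_toFinset_bitIndices]
      · simp [hab]
    · intro k _ j _ hkj
      have := Nat.eq_of_mul_eq_mul_right (Nat.pos_of_ne_zero ha0) hkj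
      exact Nat.pow_right_injective le_rfl this
  rw [Finset.sum_congr rfl hstep, Finset.sum_ite_eq' μ.toFinset b (fun a => μ.count a)]
  by_cases hb : b ∈ μ.toFinset
  · simp [hb]
  · simp [hb, Multiset.count_eq_zero.2 (fun h => hb (Multiset.mem_toFinset.2 h))]

end Glaisher

namespace Glaisher

lemma odd_of_mod6 {m : ℕ} (h : m % 6 = 1 ∨ m % 6 = 5) : ¬ 2 ∣ m := by omega

lemma not_three_dvd_of_mod6 {m : ℕ} (h : m % 6 = 1 ∨ m % 6 = 5) : ¬ 3 ∣ m := by omega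

lemma f_mem {S : Finset ℕ} (hS : ∀ s ∈ S, s % 3 = 1 ∨ s % 3 = 2) :
    ∀ m ∈ f S, m % 6 = 1 ∨ m % 6 = 5 := by
  intro m hm
  obtain ⟨s, hs, rfl⟩ := mem_f.1 hm
  have hs0 : s ≠ 0 := by have := hS s hs; omega
  have h2 : ¬ 2 ∣ ordCompl[2] s := Nat.not_dvd_ordCompl Nat.prime_two hs0
  have h3 : ¬ 3 ∣ ordCompl[2] s := by
    intro h
    have : (3 : ℕ) ∣ s := h.trans (Nat.ordCompl_dvd s 2)
    have := hS s hs
    omega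
  omega

lemma g_mem {μ : Multiset ℕ} (hμ : ∀ m ∈ μ, m % 6 = 1 ∨ m % 6 = 5) :
    ∀ t ∈ g μ, t % 3 = 1 ∨ t % 3 = 2 := by
  intro t ht
  obtain ⟨a, ha, k, -, rfl⟩ := mem_g.1 ht
  have h3 : ¬ (3 : ℕ) ∣ 2 ^ k * a := by
    intro h
    rcases (Nat.Prime.dvd_mul (by norm_num)).1 h with h | h
    · have : (3 : ℕ) ∣ 2 := Nat.Prime.dvd_of_dvd_pow (by norm_num) h
      omega
    · exact not_three_dvd_of_mod6 (hμ a ha) h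
  omega

end Glaisher


open Glaisher in
/-- The number of partitions of `n` into parts `≡ ±1 (mod 6)` equals the number of
partitions of `n` into distinct parts `≡ ±1 (mod 3)`. -/
theorem stmt_5 (n : ℕ) (hn : 0 < n) :
    Nat.card {μ : Multiset ℕ | (∀ m ∈ μ, m % 6 = 1 ∨ m % 6 = 5) ∧ μ.sum = n} =
      Nat.card {S : Finset ℕ | (∀ m ∈ S, m % 3 = 1 ∨ m % 3 = 2) ∧ ∑ m ∈ S, m = n} := by
  apply Nat.card_congr
  refine ⟨fun μ => ⟨g μ.1, g_mem μ.2.1, ?_⟩, fun S => ⟨f S.1, f_mem S.2.1, ?_⟩, ?_, ?_⟩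
  · obtain ⟨μ, hμ, hsum⟩ := μ
    have hodd : ∀ a ∈ μ, ¬ 2 ∣ a := fun a ha => odd_of_mod6 (hμ a ha)
    have := sum_f (g μ)
    rw [f_g hodd] at this
    rw [← this, hsum]
  · obtain ⟨S, hS, hsum⟩ := S
    rw [sum_f, hsum]
  · rintro ⟨μ, hμ, hsum⟩
    exact Subtype.ext (f_g (fun a ha => odd_of_mod6 (hμ a ha)))
  · rintro ⟨S, hS, hsum⟩
    refine Subtype.ext (g_f (fun s hs => ?_))
    have := hS s hs; omega
end

section
/- Let q be a complex number with |q| < 1 and let l, r be integers with 0 < r < l. Then ∑_{n ∈ ℤ} q^{ln²−rn} = ∏_{n=1}^∞ (1−q^{2ln})(1−q^{4ln−2(l−r)})(1−q^{4l(n−1)+2(l−r)}) / ((1−q^{2ln−l−r})(1−q^{2l(n−1)+l+r})). -/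
open scoped BigOperators


open Finset

namespace JTPaux

noncomputable def gbN (t : ℂ) (a b : ℕ) : ℂ := ∏ i ∈ Finset.range b, (1 - t ^ (a - b + 1 + i))

noncomputable def gbD (t : ℂ) (b : ℕ) : ℂ := ∏ i ∈ Finset.range b, (1 - t ^ (i + 1))

noncomputable def gb (t : ℂ) (a b : ℕ) : ℂ := if b ≤ a then gbN t a b / gbD t b else 0

variable {t : ℂ}

lemma fact_pow {x y : ℕ} (h : x = y) : 1 - t ^ x = 1 - t ^ y := by rw [h]

lemma gbD_ne (ht : ∀ k : ℕ, 1 - t ^ (k + 1) ≠ 0) (b : ℕ) : gbD t b ≠ 0 :=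
  Finset.prod_ne_zero_iff.2 fun i _ => ht i

lemma gbN_top {a b : ℕ} (hb : b ≤ a) : gbN t (a+1) (b+1) = gbN t a b * (1 - t ^ (a+1)) := by
  unfold gbN
  rw [Finset.prod_range_succ]
  congr 1
  · exact Finset.prod_congr rfl fun i _ => fact_pow (by omega)
  · exact fact_pow (by omega)

lemma gbN_bot {a b : ℕ} (hb : b + 1 ≤ a) : gbN t a (b+1) = gbN t a b * (1 - t ^ (a - b)) := by
  unfold gbN
  rw [Finset.prod_range_succ']
  congr 1
  · exact Finset.prod_congr rfl fun i _ => fact_pow (by omega)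
  · exact fact_pow (by omega)

lemma gbN_diag (a : ℕ) : gbN t a a = gbD t a :=
  Finset.prod_congr rfl fun i _ => fact_pow (by omega)

lemma gb_zero_right (a : ℕ) : gb t a 0 = 1 := by
  simp [gb, gbN, gbD]

lemma gb_diag (ht : ∀ k : ℕ, 1 - t ^ (k + 1) ≠ 0) (a : ℕ) : gb t a a = 1 := by
  simp [gb, gbN_diag, div_self (gbD_ne ht a)]

lemma gb_of_gt {a b : ℕ} (h : a < b) : gb t a b = 0 := by
  simp [gb, not_le.2 h]

lemma gbP1 (ht : ∀ k : ℕ, 1 - t ^ (k + 1) ≠ 0) {a b : ℕ} (hb : b ≤ a + 1) :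
    gb t (a+1) (b+1) = gb t a (b+1) + t ^ (a - b) * gb t a b := by
  rcases Nat.lt_or_ge b a with hlt | hge
  · have hb1 : b + 1 ≤ a := hlt
    have hba : b ≤ a := le_of_lt hlt
    have huv : t ^ (a + 1) = t ^ (a - b) * t ^ (b + 1) := by
      rw [← pow_add]; exact congrArg (t ^ ·) (by omega)
    rw [gb, if_pos (by omega), gb, if_pos hb1, gb, if_pos hba]
    rw [gbN_top hba, gbN_bot hb1, gbD, Finset.prod_range_succ, ← gbD, huv]
    have hD := gbD_ne ht b
    have hv : (1 : ℂ) - t ^ (b + 1) ≠ 0 := ht b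
    field_simp
    ring
  · rcases Nat.eq_or_lt_of_le hge with heq | hgt
    · subst heq
      rw [gb_diag ht, gb_of_gt (by omega), gb_diag ht]
      simp
    · have hba : b = a + 1 := by omega
      subst hba
      rw [gb_of_gt (by omega), gb_of_gt (by omega), gb_of_gt (by omega)]
      ring

lemma gbP2 (ht : ∀ k : ℕ, 1 - t ^ (k + 1) ≠ 0) {a b : ℕ} (hb : b ≤ a + 1) :
    gb t (a+1) (b+1) = t ^ (b+1) * gb t a (b+1) + gb t a b := by
  rcases Nat.lt_or_ge b a with hlt | hge
  · have hb1 : b + 1 ≤ a := hlt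
    have hba : b ≤ a := le_of_lt hlt
    have huv : t ^ (a + 1) = t ^ (b + 1) * t ^ (a - b) := by
      rw [← pow_add]; exact congrArg (t ^ ·) (by omega)
    rw [gb, if_pos (by omega), gb, if_pos hb1, gb, if_pos hba]
    rw [gbN_top hba, gbN_bot hb1, gbD, Finset.prod_range_succ, ← gbD, huv]
    have hD := gbD_ne ht b
    have hv : (1 : ℂ) - t ^ (b + 1) ≠ 0 := ht b
    field_simp
    ring
  · rcases Nat.eq_or_lt_of_le hge with heq | hgt
    · subst heq
      rw [gb_diag ht, gb_of_gt (by omega), gb_diag ht]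
      ring
    · have hba : b = a + 1 := by omega
      subst hba
      rw [gb_of_gt (by omega), gb_of_gt (by omega), gb_of_gt (by omega)]
      ring

lemma gbR (ht : ∀ k : ℕ, 1 - t ^ (k + 1) ≠ 0) {m c : ℕ} (hc : c ≤ 2*m) :
    gb t (2*m+2) (c+2) = (1 + t ^ (2*m+1)) * gb t (2*m) (c+1)
      + t ^ (c+2) * gb t (2*m) (c+2) + t ^ (2*m - c) * gb t (2*m) c := by
  have h1 := gbP1 ht (a := 2*m+1) (b := c+1) (by omega)
  rw [show 2*m+1+1 = 2*m+2 by ring, show 2*m+1 - (c+1) = 2*m - c by omega,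
    show c+1+1 = c+2 by ring] at h1
  have h2 := gbP2 ht (a := 2*m) (b := c+1) (by omega)
  rw [show c+1+1 = c+2 by ring] at h2
  have h3 := gbP2 ht (a := 2*m) (b := c) (by omega)
  have h4 : t ^ (2*m - c) * t ^ (c+1) = t ^ (2*m+1) := by
    rw [← pow_add]; exact congrArg (t ^ ·) (by omega)
  rw [h1, h2, h3, mul_add, ← mul_assoc, h4]
  ring

end JTPaux

namespace JTPaux

noncomputable def G (t : ℂ) (m : ℕ) (j : ℤ) : ℂ :=
  if 0 ≤ (m:ℤ) + j then gb t (2*m) ((m:ℤ) + j).toNat else 0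

variable {t : ℂ}

lemma G_eq_zero_left {m : ℕ} {j : ℤ} (h : j < -(m:ℤ)) : G t m j = 0 := by
  rw [G, if_neg (by omega)]

lemma G_eq_zero_right {m : ℕ} {j : ℤ} (h : (m:ℤ) < j) : G t m j = 0 := by
  rw [G, if_pos (by omega), gb_of_gt (by omega)]

lemma G_rec (ht : ∀ k : ℕ, 1 - t ^ (k + 1) ≠ 0) (m : ℕ) (j : ℤ) :
    G t (m+1) j = (1 + t ^ (2*m+1)) * G t m j + t ^ ((m:ℤ)+1-j) * G t m (j-1)
      + t ^ ((m:ℤ)+1+j) * G t m (j+1) := by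
  rcases lt_trichotomy j (-(m:ℤ)-1) with hA | hB | hD
  · -- j ≤ -(m+2) : everything vanishes
    rw [G_eq_zero_left (by push_cast; omega), G_eq_zero_left (by omega),
      G_eq_zero_left (by omega), G_eq_zero_left (by omega)]
    ring
  · -- j = -(m+1)
    subst hB
    rw [G, if_pos (by push_cast; omega), show ((m+1:ℕ):ℤ) + (-(m:ℤ)-1) = 0 by push_cast; ring]
    rw [G_eq_zero_left (by omega), G_eq_zero_left (by omega)]
    rw [show (-(m:ℤ)-1+1) = -(m:ℤ) by ring, G, if_pos (by omega),
      show ((m:ℕ):ℤ) + -(m:ℤ) = 0 by ring]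
    rw [show ((m:ℤ)+1+(-(m:ℤ)-1)) = 0 by ring, zpow_zero]
    simp [gb_zero_right]
  · rcases lt_trichotomy j (-(m:ℤ)) with h1 | hC | hD2
    · omega
    · -- j = -m
      subst hC
      rw [G, if_pos (by push_cast; omega), show ((m+1:ℕ):ℤ) + -(m:ℤ) = 1 by push_cast; ring]
      rw [G, if_pos (by omega), show ((m:ℕ):ℤ) + -(m:ℤ) = 0 by ring]
      rw [G_eq_zero_left (by omega)]
      rw [show (-(m:ℤ)+1) = -(m:ℤ)+1 from rfl, G, if_pos (by omega),
        show ((m:ℕ):ℤ) + (-(m:ℤ)+1) = 1 by ring]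
      rw [show ((m:ℤ)+1+ -(m:ℤ)) = 1 by ring, zpow_one,
        show ((m:ℤ)+1- -(m:ℤ)) = ((2*m+1 : ℕ) : ℤ) by push_cast; ring, zpow_natCast]
      have h1 := gbP1 ht (a := 2*m+1) (b := 0) (by omega)
      rw [show 2*m+1+1 = 2*(m+1) by ring, show 2*m+1-0 = 2*m+1 by omega] at h1
      have h2 := gbP2 ht (a := 2*m) (b := 0) (by omega)
      rw [show (0:ℕ)+1 = 1 from rfl] at h1 h2
      rw [show (Int.toNat 1) = 1 from rfl, show (Int.toNat 0) = 0 from rfl]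
      rw [h1, h2, gb_zero_right, gb_zero_right]
      ring
    · -- -m+1 ≤ j : split on j ≤ m+1 or beyond
      rcases le_or_gt j ((m:ℤ)+1) with hIn | hE
      · -- interior: use gbR with c = (m+j-1).toNat
        set c : ℕ := ((m:ℤ) + j - 1).toNat with hcdef
        have hc0 : ((c:ℕ):ℤ) = (m:ℤ) + j - 1 := by
          rw [hcdef]; exact Int.toNat_of_nonneg (by omega)
        have hc2m : c ≤ 2*m := by omega
        have hL : G t (m+1) j = gb t (2*m+2) (c+2) := by
          rw [G, if_pos (by push_cast; omega), show 2*(m+1) = 2*m+2 by ring,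
            show ((((m+1):ℕ):ℤ) + j).toNat = c+2 by push_cast; omega]
        have hGj : G t m j = gb t (2*m) (c+1) := by
          rw [G, if_pos (by omega), show (((m:ℕ):ℤ) + j).toNat = c+1 by omega]
        have hGjm : G t m (j-1) = gb t (2*m) c := by
          rw [G, if_pos (by omega), show (((m:ℕ):ℤ) + (j-1)).toNat = c by omega]
        have hGjp : G t m (j+1) = gb t (2*m) (c+2) := by
          rw [G, if_pos (by omega), show (((m:ℕ):ℤ) + (j+1)).toNat = c+2 by omega]
        have hz1 : t ^ ((m:ℤ)+1-j) = t ^ ((2*m - c : ℕ)) := by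
          rw [← zpow_natCast t (2*m - c)]
          congr 1
          omega
        have hz2 : t ^ ((m:ℤ)+1+j) = t ^ ((c+2 : ℕ)) := by
          rw [← zpow_natCast t (c+2)]
          congr 1
          push_cast
          omega
        rw [hL, hGj, hGjm, hGjp, hz1, hz2, gbR ht hc2m]
        ring
      · -- j ≥ m+2 : everything vanishes
        rw [G_eq_zero_right (show ((m+1:ℕ):ℤ) < j by push_cast; omega),
          G_eq_zero_right (by omega), G_eq_zero_right (by omega),
          G_eq_zero_right (by omega)]
        ring

lemma sum_Icc_shift (f : ℤ → ℂ) (a b c : ℤ) :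
    ∑ j ∈ Finset.Icc (a+c) (b+c), f j = ∑ j ∈ Finset.Icc a b, f (j + c) := by
  rw [← Finset.map_add_right_Icc, Finset.sum_map]
  simp [addRightEmbedding_apply]

end JTPaux

namespace JTPaux

lemma fjtp (q : ℂ) (hq0 : q ≠ 0) (l r : ℕ)
    (ht : ∀ k : ℕ, 1 - (q ^ (2*l)) ^ (k + 1) ≠ 0) (m : ℕ) :
    ∑ j ∈ Finset.Icc (-(m:ℤ)) (m:ℤ),
        G (q^(2*l)) m j * q ^ ((l:ℤ)*j^2 - (r:ℤ)*j)
      = ∏ k ∈ Finset.range m,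
        ((1 + q ^ ((l:ℤ)*(2*(k:ℤ)+1) - (r:ℤ))) * (1 + q ^ ((l:ℤ)*(2*(k:ℤ)+1) + (r:ℤ)))) := by
  have htpow : ∀ x : ℤ, (q ^ (2*l)) ^ x = q ^ (((2*l : ℕ) : ℤ) * x) := by
    intro x
    rw [← zpow_natCast q (2*l), ← zpow_mul]
  induction m with
  | zero =>
    simp [G, gb_zero_right]
  | succ m ih =>
    have hcast1 : (-((m+1:ℕ):ℤ)) = -(m:ℤ) - 1 := by push_cast; ring
    have hcast2 : (((m+1:ℕ)):ℤ) = (m:ℤ) + 1 := by push_cast; ring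
    rw [hcast1, hcast2]
    have hrec : ∀ j ∈ Finset.Icc (-(m:ℤ)-1) ((m:ℤ)+1),
        G (q^(2*l)) (m+1) j * q ^ ((l:ℤ)*j^2 - (r:ℤ)*j)
          = ((1 + (q^(2*l)) ^ (2*m+1)) * (G (q^(2*l)) m j * q ^ ((l:ℤ)*j^2 - (r:ℤ)*j)))
            + (G (q^(2*l)) m (j-1) * ((q^(2*l)) ^ ((m:ℤ)+1-j) * q ^ ((l:ℤ)*j^2 - (r:ℤ)*j)))
            + (G (q^(2*l)) m (j+1) * ((q^(2*l)) ^ ((m:ℤ)+1+j) * q ^ ((l:ℤ)*j^2 - (r:ℤ)*j))) := by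
      intro j _
      rw [G_rec ht m j]
      ring
    rw [Finset.sum_congr rfl hrec, Finset.sum_add_distrib, Finset.sum_add_distrib]
    have hsub : Finset.Icc (-(m:ℤ)) (m:ℤ) ⊆ Finset.Icc (-(m:ℤ)-1) ((m:ℤ)+1) :=
      Finset.Icc_subset_Icc (by omega) (by omega)
    have hS1 : ∑ j ∈ Finset.Icc (-(m:ℤ)-1) ((m:ℤ)+1),
        ((1 + (q^(2*l)) ^ (2*m+1)) * (G (q^(2*l)) m j * q ^ ((l:ℤ)*j^2 - (r:ℤ)*j)))
        = (1 + (q^(2*l)) ^ (2*m+1)) * ∑ j ∈ Finset.Icc (-(m:ℤ)) (m:ℤ),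
            G (q^(2*l)) m j * q ^ ((l:ℤ)*j^2 - (r:ℤ)*j) := by
      rw [← Finset.mul_sum]
      congr 1
      refine (Finset.sum_subset hsub fun j hj hnot => ?_).symm
      simp only [Finset.mem_Icc] at hj hnot
      rcases (by omega : j < -(m:ℤ) ∨ (m:ℤ) < j) with h | h
      · rw [G_eq_zero_left h, zero_mul]
      · rw [G_eq_zero_right h, zero_mul]
    have hS2 : ∑ j ∈ Finset.Icc (-(m:ℤ)-1) ((m:ℤ)+1),
        (G (q^(2*l)) m (j-1) * ((q^(2*l)) ^ ((m:ℤ)+1-j) * q ^ ((l:ℤ)*j^2 - (r:ℤ)*j)))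
        = q ^ ((l:ℤ)*(2*(m:ℤ)+1) - (r:ℤ)) * ∑ j ∈ Finset.Icc (-(m:ℤ)) (m:ℤ),
            G (q^(2*l)) m j * q ^ ((l:ℤ)*j^2 - (r:ℤ)*j) := by
      have hshift := sum_Icc_shift
        (fun j => G (q^(2*l)) m (j-1) * ((q^(2*l)) ^ ((m:ℤ)+1-j) * q ^ ((l:ℤ)*j^2 - (r:ℤ)*j)))
        (-(m:ℤ)-2) (m:ℤ) 1
      rw [show (-(m:ℤ)-2+1) = -(m:ℤ)-1 by ring] at hshift
      rw [hshift]
      have hsub2 : Finset.Icc (-(m:ℤ)) (m:ℤ) ⊆ Finset.Icc (-(m:ℤ)-2) (m:ℤ) :=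
        Finset.Icc_subset_Icc (by omega) le_rfl
      have hvan : ∀ j ∈ Finset.Icc (-(m:ℤ)-2) (m:ℤ), j ∉ Finset.Icc (-(m:ℤ)) (m:ℤ) →
          G (q^(2*l)) m (j+1-1) * ((q^(2*l)) ^ ((m:ℤ)+1-(j+1)) * q ^ ((l:ℤ)*(j+1)^2 - (r:ℤ)*(j+1))) = 0 := by
        intro j hj hnot
        simp only [Finset.mem_Icc] at hj hnot
        rw [show j+1-1 = j by ring, G_eq_zero_left (by omega), zero_mul]
      rw [← Finset.sum_subset hsub2 hvan, Finset.mul_sum]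
      refine Finset.sum_congr rfl fun j hj => ?_
      rw [show j+1-1 = j by ring, htpow, ← zpow_add₀ hq0,
        show (((2*l : ℕ):ℤ) * ((m:ℤ)+1-(j+1)) + ((l:ℤ)*(j+1)^2 - (r:ℤ)*(j+1)))
          = ((l:ℤ)*(2*(m:ℤ)+1) - (r:ℤ)) + ((l:ℤ)*j^2 - (r:ℤ)*j) by push_cast; ring,
        zpow_add₀ hq0]
      ring
    have hS3 : ∑ j ∈ Finset.Icc (-(m:ℤ)-1) ((m:ℤ)+1),
        (G (q^(2*l)) m (j+1) * ((q^(2*l)) ^ ((m:ℤ)+1+j) * q ^ ((l:ℤ)*j^2 - (r:ℤ)*j)))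
        = q ^ ((l:ℤ)*(2*(m:ℤ)+1) + (r:ℤ)) * ∑ j ∈ Finset.Icc (-(m:ℤ)) (m:ℤ),
            G (q^(2*l)) m j * q ^ ((l:ℤ)*j^2 - (r:ℤ)*j) := by
      have hshift := sum_Icc_shift
        (fun j => G (q^(2*l)) m (j+1) * ((q^(2*l)) ^ ((m:ℤ)+1+j) * q ^ ((l:ℤ)*j^2 - (r:ℤ)*j)))
        (-(m:ℤ)) ((m:ℤ)+2) (-1)
      rw [show (-(m:ℤ)+(-1)) = -(m:ℤ)-1 by ring, show ((m:ℤ)+2+(-1)) = (m:ℤ)+1 by ring] at hshift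
      rw [hshift]
      have hsub3 : Finset.Icc (-(m:ℤ)) (m:ℤ) ⊆ Finset.Icc (-(m:ℤ)) ((m:ℤ)+2) :=
        Finset.Icc_subset_Icc le_rfl (by omega)
      have hvan : ∀ j ∈ Finset.Icc (-(m:ℤ)) ((m:ℤ)+2), j ∉ Finset.Icc (-(m:ℤ)) (m:ℤ) →
          G (q^(2*l)) m (j+(-1)+1) * ((q^(2*l)) ^ ((m:ℤ)+1+(j+(-1))) * q ^ ((l:ℤ)*(j+(-1))^2 - (r:ℤ)*(j+(-1)))) = 0 := by
        intro j hj hnot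
        simp only [Finset.mem_Icc] at hj hnot
        rw [show j+(-1)+1 = j by ring, G_eq_zero_right (by omega), zero_mul]
      rw [← Finset.sum_subset hsub3 hvan, Finset.mul_sum]
      refine Finset.sum_congr rfl fun j hj => ?_
      rw [show j+(-1)+1 = j by ring, htpow, ← zpow_add₀ hq0,
        show (((2*l : ℕ):ℤ) * ((m:ℤ)+1+(j+(-1))) + ((l:ℤ)*(j+(-1))^2 - (r:ℤ)*(j+(-1))))
          = ((l:ℤ)*(2*(m:ℤ)+1) + (r:ℤ)) + ((l:ℤ)*j^2 - (r:ℤ)*j) by push_cast; ring,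
        zpow_add₀ hq0]
      ring
    have hfac : (q^(2*l)) ^ (2*m+1)
        = q ^ ((l:ℤ)*(2*(m:ℤ)+1) - (r:ℤ)) * q ^ ((l:ℤ)*(2*(m:ℤ)+1) + (r:ℤ)) := by
      rw [← zpow_add₀ hq0, ← pow_mul, ← zpow_natCast q (2*l*(2*m+1))]
      congr 1
      push_cast; ring
    rw [hS1, hS2, hS3, ih, Finset.prod_range_succ, hfac]
    ring

end JTPaux

namespace JTPaux
open Filter Topology

lemma one_sub_ne {x : ℂ} (h : ‖x‖ < 1) : 1 - x ≠ 0 := by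
  intro h0
  rw [sub_eq_zero] at h0
  rw [← h0] at h
  simp at h

lemma key_exp_le {ρ x : ℝ} (hρ : ρ < 1) (h0 : 0 ≤ x) (hx : x ≤ ρ) :
    Real.exp (-(x/(1-ρ))) ≤ 1 - x := by
  have h1 : 0 < 1 - ρ := by linarith
  have hy0 : 0 ≤ x/(1-ρ) := div_nonneg h0 h1.le
  have h2 : Real.exp (-(x/(1-ρ))) ≤ (1 + x/(1-ρ))⁻¹ := by
    rw [Real.exp_neg]
    exact inv_anti₀ (by linarith) (Real.add_one_le_exp _ |>.trans_eq' (by ring))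
  refine h2.trans ?_
  rw [inv_le_iff_one_le_mul₀ (by linarith)]
  have : (1 - x) * (1 + x/(1-ρ)) - 1 = x * (ρ - x) / (1-ρ) := by field_simp; ring
  nlinarith [div_nonneg (mul_nonneg h0 (by linarith : (0:ℝ) ≤ ρ - x)) h1.le]

lemma prod_eq_cexp (s : Finset ℕ) (g : ℕ → ℂ) (hg : ∀ i ∈ s, g i ≠ 0) :
    ∏ i ∈ s, g i = Complex.exp (∑ i ∈ s, Complex.log (g i)) := by
  rw [Complex.exp_sum]
  exact Finset.prod_congr rfl fun i hi => (Complex.exp_log (hg i hi)).symm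

lemma norm_log_le_of_small {z : ℂ} (w : ℂ) (hw : w = 1 + z) (hz : ‖z‖ ≤ 1/2) :
    ‖Complex.log w‖ ≤ 3/2 * ‖z‖ := by
  rw [hw]; exact Complex.norm_log_one_add_half_le_self hz

lemma summable_log {ρ : ℝ} (h0 : 0 ≤ ρ) (hρ1 : ρ < 1) (g : ℕ → ℂ)
    (h : ∀ k, ‖g k - 1‖ ≤ ρ^(k+1)) :
    Summable fun k => Complex.log (g k) := by
  have hb : Summable fun k : ℕ => 3/2 * ρ^(k+1) := by
    refine Summable.congr (((summable_geometric_of_lt_one h0 hρ1).mul_right ρ).mul_left (3/2)) ?_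
    intro k
    rw [pow_succ]
  refine hb.of_norm_bounded_eventually_nat ?_
  have hev : ∀ᶠ k : ℕ in atTop, ρ^(k+1) ≤ 1/2 := by
    have := (tendsto_pow_atTop_nhds_zero_of_lt_one h0 hρ1).eventually_le_const
      (by norm_num : (0:ℝ) < 1/2)
    filter_upwards [this] with k hk
    calc ρ^(k+1) ≤ ρ^k := pow_le_pow_of_le_one h0 hρ1.le (by omega)
    _ ≤ 1/2 := hk
  filter_upwards [hev] with k hk
  calc ‖Complex.log (g k)‖ ≤ 3/2 * ‖g k - 1‖ :=
        norm_log_le_of_small (g k) (by ring) ((h k).trans hk)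
  _ ≤ 3/2 * ρ^(k+1) := by nlinarith [h k, norm_nonneg (g k - 1)]

lemma geom_range_le {ρ : ℝ} (h0 : 0 ≤ ρ) (hρ1 : ρ < 1) (b : ℕ) :
    ∑ i ∈ Finset.range b, ρ^i ≤ (1-ρ)⁻¹ := by
  have := Summable.sum_le_tsum (Finset.range b) (fun i _ => pow_nonneg h0 i)
    (summable_geometric_of_lt_one h0 hρ1)
  rwa [tsum_geometric_of_lt_one h0 hρ1] at this

lemma norm_sum_log_le {ρ : ℝ} (h0 : 0 ≤ ρ) (hρ1 : ρ < 1) {c : ℕ} (hhalf : ρ^(c+1) ≤ 1/2)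
    (g : ℕ → ℂ) (h : ∀ i, ‖g i - 1‖ ≤ ρ^(c+1+i)) (b : ℕ) :
    ‖∑ i ∈ Finset.range b, Complex.log (g i)‖ ≤ 3/2 * (1-ρ)⁻¹ * ρ^(c+1) := by
  calc ‖∑ i ∈ Finset.range b, Complex.log (g i)‖
      ≤ ∑ i ∈ Finset.range b, ‖Complex.log (g i)‖ := norm_sum_le _ _
    _ ≤ ∑ i ∈ Finset.range b, 3/2 * (ρ^(c+1) * ρ^i) := by
        refine Finset.sum_le_sum fun i _ => ?_
        have hsmall : ‖g i - 1‖ ≤ 1/2 := by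
          refine (h i).trans (le_trans ?_ hhalf)
          exact pow_le_pow_of_le_one h0 hρ1.le (by omega)
        calc ‖Complex.log (g i)‖ ≤ 3/2 * ‖g i - 1‖ :=
              norm_log_le_of_small (g i) (by ring) hsmall
        _ ≤ 3/2 * (ρ^(c+1) * ρ^i) := by
            have := h i
            rw [← pow_add]
            nlinarith [norm_nonneg (g i - 1)]
    _ = 3/2 * ρ^(c+1) * ∑ i ∈ Finset.range b, ρ^i := by
        rw [Finset.mul_sum]
        refine Finset.sum_congr rfl fun i _ => by ring
    _ ≤ 3/2 * ρ^(c+1) * (1-ρ)⁻¹ := by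
        have hg := geom_range_le h0 hρ1 b
        have : (0:ℝ) ≤ 3/2 * ρ^(c+1) := by positivity
        nlinarith [this]
    _ = 3/2 * (1-ρ)⁻¹ * ρ^(c+1) := by ring

lemma norm_tsum_log_le {ρ : ℝ} (h0 : 0 ≤ ρ) (hρ1 : ρ < 1) {c : ℕ} (hhalf : ρ^(c+1) ≤ 1/2)
    (g : ℕ → ℂ) (h : ∀ i, ‖g i - 1‖ ≤ ρ^(c+1+i)) :
    ‖∑' i : ℕ, Complex.log (g i)‖ ≤ 3/2 * (1-ρ)⁻¹ * ρ^(c+1) := by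
  have hbnd : ∀ i : ℕ, ‖Complex.log (g i)‖ ≤ 3/2 * (ρ^(c+1) * ρ^i) := by
    intro i
    have hsmall : ‖g i - 1‖ ≤ 1/2 := by
      refine (h i).trans (le_trans ?_ hhalf)
      exact pow_le_pow_of_le_one h0 hρ1.le (by omega)
    calc ‖Complex.log (g i)‖ ≤ 3/2 * ‖g i - 1‖ :=
          norm_log_le_of_small (g i) (by ring) hsmall
    _ ≤ 3/2 * (ρ^(c+1) * ρ^i) := by
        have := h i
        rw [← pow_add]
        nlinarith [norm_nonneg (g i - 1)]
  have hsb : Summable fun i : ℕ => 3/2 * (ρ^(c+1) * ρ^i) :=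
    ((summable_geometric_of_lt_one h0 hρ1).mul_left _).mul_left _
  have hsn : Summable fun i : ℕ => ‖Complex.log (g i)‖ :=
    hsb.of_nonneg_of_le (fun i => norm_nonneg _) hbnd
  calc ‖∑' i : ℕ, Complex.log (g i)‖ ≤ ∑' i : ℕ, ‖Complex.log (g i)‖ :=
        norm_tsum_le_tsum_norm hsn
  _ ≤ ∑' i : ℕ, 3/2 * (ρ^(c+1) * ρ^i) := Summable.tsum_le_tsum hbnd hsn hsb
  _ = 3/2 * (1-ρ)⁻¹ * ρ^(c+1) := by
      rw [tsum_mul_left, tsum_mul_left, tsum_geometric_of_lt_one h0 hρ1]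
      ring

end JTPaux

namespace JTPaux
open Filter Topology

lemma norm_gbN_le {t : ℂ} (h1 : ‖t‖ < 1) (a b : ℕ) :
    ‖gbN t a b‖ ≤ Real.exp (‖t‖ * (1-‖t‖)⁻¹) := by
  set ρ := ‖t‖ with hρ
  have h0 : 0 ≤ ρ := norm_nonneg t
  calc ‖gbN t a b‖ = ∏ i ∈ Finset.range b, ‖1 - t ^ (a - b + 1 + i)‖ := norm_prod _ _
    _ ≤ ∏ i ∈ Finset.range b, Real.exp (ρ^(i+1)) := by
        refine Finset.prod_le_prod (fun i _ => norm_nonneg _) fun i _ => ?_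
        calc ‖1 - t ^ (a - b + 1 + i)‖ ≤ ‖(1:ℂ)‖ + ‖t ^ (a - b + 1 + i)‖ := norm_sub_le _ _
          _ = 1 + ρ^(a - b + 1 + i) := by rw [norm_one, norm_pow]
          _ ≤ 1 + ρ^(i+1) := by
              have := pow_le_pow_of_le_one h0 h1.le (show i+1 ≤ a - b + 1 + i by omega)
              linarith
          _ ≤ Real.exp (ρ^(i+1)) := by
              have := Real.add_one_le_exp (ρ^(i+1))
              linarith
    _ = Real.exp (∑ i ∈ Finset.range b, ρ^(i+1)) := (Real.exp_sum _ _).symm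
    _ ≤ Real.exp (ρ * (1-ρ)⁻¹) := by
        rw [Real.exp_le_exp]
        calc ∑ i ∈ Finset.range b, ρ^(i+1) = ρ * ∑ i ∈ Finset.range b, ρ^i := by
              rw [Finset.mul_sum]
              exact Finset.sum_congr rfl fun i _ => by ring
        _ ≤ ρ * (1-ρ)⁻¹ := by
            have := geom_range_le h0 h1 b
            nlinarith [h0]

lemma norm_gbD_ge {t : ℂ} (h1 : ‖t‖ < 1) (b : ℕ) :
    Real.exp (-(‖t‖ * (1-‖t‖)⁻¹ * (1-‖t‖)⁻¹)) ≤ ‖gbD t b‖ := by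
  set ρ := ‖t‖ with hρ
  have h0 : 0 ≤ ρ := norm_nonneg t
  have h2 : 0 < 1 - ρ := by linarith
  calc Real.exp (-(ρ * (1-ρ)⁻¹ * (1-ρ)⁻¹))
      ≤ Real.exp (∑ i ∈ Finset.range b, -(ρ^(i+1)/(1-ρ))) := by
        rw [Real.exp_le_exp]
        have hsum : ∑ i ∈ Finset.range b, -(ρ^(i+1)/(1-ρ))
            = -((∑ i ∈ Finset.range b, ρ^(i+1)) * (1-ρ)⁻¹) := by
          rw [Finset.sum_neg_distrib]
          congr 1
          rw [Finset.sum_mul]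
          exact Finset.sum_congr rfl fun i _ => by rw [div_eq_mul_inv]
        rw [hsum, neg_le_neg_iff]
        have hle : ∑ i ∈ Finset.range b, ρ^(i+1) ≤ ρ * (1-ρ)⁻¹ := by
          calc ∑ i ∈ Finset.range b, ρ^(i+1) = ρ * ∑ i ∈ Finset.range b, ρ^i := by
                rw [Finset.mul_sum]
                exact Finset.sum_congr rfl fun i _ => by ring
          _ ≤ ρ * (1-ρ)⁻¹ := by
              have := geom_range_le h0 h1 b
              nlinarith [h0]
        have hpos : (0:ℝ) ≤ (1-ρ)⁻¹ := inv_nonneg.2 h2.le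
        nlinarith
    _ = ∏ i ∈ Finset.range b, Real.exp (-(ρ^(i+1)/(1-ρ))) := Real.exp_sum _ _
    _ ≤ ∏ i ∈ Finset.range b, (1 - ρ^(i+1)) := by
        refine Finset.prod_le_prod (fun i _ => (Real.exp_pos _).le) fun i _ => ?_
        exact key_exp_le h1 (pow_nonneg h0 _) (pow_le_of_le_one h0 h1.le (by omega))
    _ ≤ ∏ i ∈ Finset.range b, ‖1 - t^(i+1)‖ := by
        refine Finset.prod_le_prod (fun i _ => ?_) fun i _ => ?_
        · have := pow_le_one₀ h0 h1.le (n := i+1)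
          linarith
        · have := norm_sub_norm_le (1:ℂ) (t^(i+1))
          rw [norm_one, norm_pow] at this
          linarith
    _ = ‖gbD t b‖ := (norm_prod _ _).symm

noncomputable def CC (t : ℂ) : ℝ :=
  Real.exp (‖t‖ * (1-‖t‖)⁻¹) * Real.exp (‖t‖ * (1-‖t‖)⁻¹ * (1-‖t‖)⁻¹)

lemma CC_nonneg (t : ℂ) : 0 ≤ CC t := by unfold CC; positivity

lemma norm_gb_le {t : ℂ} (h1 : ‖t‖ < 1) (a b : ℕ) : ‖gb t a b‖ ≤ CC t := by
  rw [gb]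
  split_ifs with h
  · rw [norm_div]
    have hN := norm_gbN_le h1 a b
    have hD := norm_gbD_ge h1 b
    have hDpos : (0:ℝ) < Real.exp (-(‖t‖ * (1-‖t‖)⁻¹ * (1-‖t‖)⁻¹)) := Real.exp_pos _
    calc ‖gbN t a b‖ / ‖gbD t b‖
        ≤ Real.exp (‖t‖ * (1-‖t‖)⁻¹) / Real.exp (-(‖t‖ * (1-‖t‖)⁻¹ * (1-‖t‖)⁻¹)) := by
          apply div_le_div₀ (by positivity) hN hDpos hD
      _ = CC t := by
          rw [Real.exp_neg, CC, div_eq_mul_inv, inv_inv]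
  · simp [CC_nonneg t]

lemma norm_G_le {t : ℂ} (h1 : ‖t‖ < 1) (m : ℕ) (j : ℤ) : ‖G t m j‖ ≤ CC t := by
  rw [G]
  split_ifs with h
  · exact norm_gb_le h1 _ _
  · simp [CC_nonneg t]

end JTPaux

namespace JTPaux
open Filter Topology

lemma GE_tendsto {t : ℂ} (ht0 : t ≠ 0) (h1 : ‖t‖ < 1) (j : ℤ) :
    Tendsto (fun m : ℕ => G t m j * Complex.exp (∑' i : ℕ, Complex.log (1 - t^(i+1))))
      atTop (𝓝 1) := by
  have h0 : 0 ≤ ‖t‖ := norm_nonneg t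
  have hρ0 : 0 < ‖t‖ := norm_pos_iff.2 ht0
  set ρ := ‖t‖ with hρdef
  have hfac : ∀ n : ℕ, 1 ≤ n → 1 - t^n ≠ 0 := by
    intro n hn
    refine one_sub_ne ?_
    rw [norm_pow]
    exact pow_lt_one₀ h0 h1 (by omega)
  have hsum : Summable (fun i : ℕ => Complex.log (1 - t^(i+1))) := by
    refine summable_log h0 h1 _ fun k => ?_
    rw [show (1 : ℂ) - t^(k+1) - 1 = -(t^(k+1)) by ring, norm_neg, norm_pow]
  set Sw := ∑' i : ℕ, Complex.log (1 - t^(i+1)) with hSw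
  set jA := j.natAbs with hjA
  have hjb : (j ≤ (jA:ℤ)) ∧ (-(jA:ℤ) ≤ j) := by omega
  -- eventual rewriting of G * exp Sw
  have hev : ∀ᶠ m : ℕ in atTop, G t m j * Complex.exp Sw
      = Complex.exp (∑ i ∈ Finset.range (((m:ℤ)+j).toNat),
            Complex.log (1 - t^(2*m - ((m:ℤ)+j).toNat + 1 + i)))
        * Complex.exp (∑' i : ℕ, Complex.log (1 - t^(((m:ℤ)+j).toNat + 1 + i))) := by
    filter_upwards [eventually_ge_atTop jA] with m hm
    have hble : ((m:ℤ)+j).toNat ≤ 2*m := by omega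
    have hG : G t m j = gbN t (2*m) (((m:ℤ)+j).toNat) / gbD t (((m:ℤ)+j).toNat) := by
      rw [G, if_pos (by omega), gb, if_pos hble]
    set b := ((m:ℤ)+j).toNat with hbdef
    have hNexp : gbN t (2*m) b
        = Complex.exp (∑ i ∈ Finset.range b, Complex.log (1 - t^(2*m - b + 1 + i))) := by
      rw [gbN]
      exact prod_eq_cexp _ _ fun i _ => hfac _ (by omega)
    have hDexp : gbD t b = Complex.exp (∑ i ∈ Finset.range b, Complex.log (1 - t^(i+1))) := by
      rw [gbD]
      exact prod_eq_cexp _ _ fun i _ => hfac _ (by omega)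
    have htail : ∑' i : ℕ, Complex.log (1 - t^(b + 1 + i))
        = Sw - ∑ i ∈ Finset.range b, Complex.log (1 - t^(i+1)) := by
      rw [eq_sub_iff_add_eq, add_comm]
      have h := Summable.sum_add_tsum_nat_add b hsum
      rw [hSw, ← h]
      congr 1
      exact tsum_congr fun i => by rw [show i + b + 1 = b + 1 + i by omega]
    rw [hG, hNexp, hDexp, htail, Complex.exp_sub]
    ring
  -- dominating sequence
  have haux : Tendsto (fun m : ℕ => ρ^(m+1) / ρ^jA) atTop (𝓝 0) := by
    have h := (tendsto_pow_atTop_nhds_zero_of_lt_one h0 h1).comp (tendsto_add_atTop_nat 1)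
    simpa using h.div_const (ρ^jA)
  have hhalf_ev : ∀ᶠ m : ℕ in atTop, ρ^(m+1) / ρ^jA ≤ 1/2 :=
    haux.eventually_le_const (by norm_num : (0:ℝ) < 1/2)
  have hball : Tendsto (fun m : ℕ => (3/2 : ℝ) * (1-ρ)⁻¹ * (ρ^(m+1) / ρ^jA)) atTop (𝓝 0) := by
    simpa using haux.const_mul ((3/2 : ℝ) * (1-ρ)⁻¹)
  have hineq : ∀ m : ℕ, jA ≤ m → ∀ c : ℕ, m - jA ≤ c → ρ^(c+1) ≤ ρ^(m+1) / ρ^jA := by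
    intro m hm c hc
    have h2 : ρ^(c+1) ≤ ρ^((m - jA)+1) :=
      pow_le_pow_of_le_one h0 h1.le (by omega)
    have h3 : ρ^((m-jA)+1) = ρ^(m+1) / ρ^jA := by
      rw [eq_div_iff (pow_ne_zero jA (ne_of_gt hρ0)), ← pow_add]
      congr 1
      omega
    rw [← h3]
    exact h2
  have hA : Tendsto (fun m : ℕ => ∑ i ∈ Finset.range (((m:ℤ)+j).toNat),
      Complex.log (1 - t^(2*m - ((m:ℤ)+j).toNat + 1 + i))) atTop (𝓝 0) := by
    apply squeeze_zero_norm' ?_ hball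
    filter_upwards [eventually_ge_atTop jA, hhalf_ev] with m hm hhalf
    set b := ((m:ℤ)+j).toNat with hbdef
    have hc : m - jA ≤ 2*m - b := by omega
    have hle := hineq m hm _ hc
    have hbound := norm_sum_log_le h0 h1 (c := 2*m - b) (hle.trans hhalf)
      (fun i => 1 - t^(2*m - b + 1 + i))
      (fun i => by rw [show (1:ℂ) - t^(2*m-b+1+i) - 1 = -(t^(2*m-b+1+i)) by ring,
        norm_neg, norm_pow]) b
    refine hbound.trans ?_
    have hpos : (0:ℝ) ≤ (3/2 : ℝ) * (1-ρ)⁻¹ := by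
      have : (0:ℝ) < 1 - ρ := by linarith
      positivity
    calc (3/2 : ℝ) * (1-ρ)⁻¹ * ρ^(2*m-b+1) ≤ (3/2 : ℝ) * (1-ρ)⁻¹ * (ρ^(m+1)/ρ^jA) :=
      mul_le_mul_of_nonneg_left hle hpos
    _ = _ := rfl
  have hB : Tendsto (fun m : ℕ => ∑' i : ℕ,
      Complex.log (1 - t^(((m:ℤ)+j).toNat + 1 + i))) atTop (𝓝 0) := by
    apply squeeze_zero_norm' ?_ hball
    filter_upwards [eventually_ge_atTop jA, hhalf_ev] with m hm hhalf
    set b := ((m:ℤ)+j).toNat with hbdef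
    have hc : m - jA ≤ b := by omega
    have hle := hineq m hm _ hc
    have hbound := norm_tsum_log_le h0 h1 (c := b) (hle.trans hhalf)
      (fun i => 1 - t^(b + 1 + i))
      (fun i => by rw [show (1:ℂ) - t^(b+1+i) - 1 = -(t^(b+1+i)) by ring,
        norm_neg, norm_pow])
    refine hbound.trans ?_
    have hpos : (0:ℝ) ≤ (3/2 : ℝ) * (1-ρ)⁻¹ := by
      have : (0:ℝ) < 1 - ρ := by linarith
      positivity
    exact mul_le_mul_of_nonneg_left hle hpos
  refine Tendsto.congr' (hev.mono fun m h => h.symm) ?_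
  have := (hA.cexp).mul (hB.cexp)
  simpa using this

end JTPaux

namespace JTPaux
open Filter Topology

lemma triple (q : ℂ) (hq0 : q ≠ 0) (hq : ‖q‖ < 1) (l r : ℕ) (hr : 0 < r) (hrl : r < l) :
    ∑' j : ℤ, q ^ ((l:ℤ)*j^2 - (r:ℤ)*j)
      = Complex.exp ((∑' i : ℕ, Complex.log (1 - (q^(2*l))^(i+1)))
          + ((∑' k : ℕ, Complex.log (1 + q^(l*(2*k+1) - r)))
            + (∑' k : ℕ, Complex.log (1 + q^(l*(2*k+1) + r))))) := by
  have hl : 0 < l := lt_trans hr hrl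
  have hρ0 : 0 ≤ ‖q‖ := norm_nonneg q
  have hρpos : 0 < ‖q‖ := norm_pos_iff.2 hq0
  set t : ℂ := q^(2*l) with htdef
  have ht0 : t ≠ 0 := pow_ne_zero _ hq0
  have htn : ‖t‖ < 1 := by
    rw [htdef, norm_pow]
    exact pow_lt_one₀ hρ0 hq (by omega)
  have hqpow : ∀ n : ℕ, 1 ≤ n → ‖q ^ n‖ < 1 := by
    intro n hn
    rw [norm_pow]
    exact pow_lt_one₀ hρ0 hq (by omega)
  have ht : ∀ k : ℕ, 1 - t^(k+1) ≠ 0 := by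
    intro k
    refine one_sub_ne ?_
    rw [htdef, ← pow_mul]
    refine hqpow _ ?_
    have : 0 < 2*l*(k+1) := by positivity
    omega
  -- exponents
  have hAu_ge : ∀ k : ℕ, k + 1 ≤ l*(2*k+1) - r := by
    intro k
    have h := Nat.mul_le_mul_right (2*k+1) (show r+1 ≤ l from hrl)
    have h2 : (r+1)*(2*k+1) = 2*r*k + r + 2*k + 1 := by ring
    omega
  have hBu_ge : ∀ k : ℕ, k + 1 ≤ l*(2*k+1) + r := by
    intro k
    have h := Nat.mul_le_mul_right (2*k+1) (show 1 ≤ l by omega)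
    omega
  have hAu_pos : ∀ k : ℕ, 1 ≤ l*(2*k+1) - r := fun k => le_trans (by omega) (hAu_ge k)
  -- nonvanishing of factors
  have hu_ne : ∀ k : ℕ, (1 : ℂ) + q^(l*(2*k+1) - r) ≠ 0 := by
    intro k
    have := hqpow _ (hAu_pos k)
    intro h
    have h2 : q^(l*(2*k+1) - r) = -1 := by linear_combination h
    rw [h2] at this
    simp at this
  have hv_ne : ∀ k : ℕ, (1 : ℂ) + q^(l*(2*k+1) + r) ≠ 0 := by
    intro k
    have := hqpow _ (le_trans (by omega) (hBu_ge k))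
    intro h
    have h2 : q^(l*(2*k+1) + r) = -1 := by linear_combination h
    rw [h2] at this
    simp at this
  -- summability of the three log series
  have hsw : Summable (fun i : ℕ => Complex.log (1 - t^(i+1))) := by
    refine summable_log (norm_nonneg t) htn _ fun k => ?_
    rw [show (1:ℂ) - t^(k+1) - 1 = -(t^(k+1)) by ring, norm_neg, norm_pow]
  have hsu : Summable (fun k : ℕ => Complex.log (1 + q^(l*(2*k+1) - r))) := by
    refine summable_log hρ0 hq _ fun k => ?_
    rw [show (1:ℂ) + q^(l*(2*k+1) - r) - 1 = q^(l*(2*k+1) - r) by ring, norm_pow]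
    exact pow_le_pow_of_le_one hρ0 hq.le (hAu_ge k)
  have hsv : Summable (fun k : ℕ => Complex.log (1 + q^(l*(2*k+1) + r))) := by
    refine summable_log hρ0 hq _ fun k => ?_
    rw [show (1:ℂ) + q^(l*(2*k+1) + r) - 1 = q^(l*(2*k+1) + r) by ring, norm_pow]
    exact pow_le_pow_of_le_one hρ0 hq.le (hBu_ge k)
  set Sw := ∑' i : ℕ, Complex.log (1 - t^(i+1)) with hSwdef
  set Su := ∑' k : ℕ, Complex.log (1 + q^(l*(2*k+1) - r)) with hSudef
  set Sv := ∑' k : ℕ, Complex.log (1 + q^(l*(2*k+1) + r)) with hSvdef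
  set E := Complex.exp Sw with hEdef
  -- zpow-to-pow bridge for the product factors
  have hz1 : ∀ k : ℕ, q ^ ((l:ℤ)*(2*(k:ℤ)+1) - (r:ℤ)) = q ^ (l*(2*k+1) - r) := by
    intro k
    have h1 : r ≤ l*(2*k+1) := le_trans hrl.le (Nat.le_mul_of_pos_right l (by omega))
    have hc : ((l*(2*k+1) - r : ℕ) : ℤ) = (l:ℤ)*(2*(k:ℤ)+1) - (r:ℤ) := by
      rw [Nat.cast_sub h1]; push_cast; ring
    rw [← zpow_natCast q (l*(2*k+1) - r), hc]
  have hz2 : ∀ k : ℕ, q ^ ((l:ℤ)*(2*(k:ℤ)+1) + (r:ℤ)) = q ^ (l*(2*k+1) + r) := by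
    intro k
    have hc : ((l*(2*k+1) + r : ℕ) : ℤ) = (l:ℤ)*(2*(k:ℤ)+1) + (r:ℤ) := by push_cast; ring
    rw [← zpow_natCast q (l*(2*k+1) + r), hc]
  -- the common sequence
  set Φ : ℕ → ℂ := fun m => (∑ j ∈ Finset.Icc (-(m:ℤ)) (m:ℤ),
      G t m j * q ^ ((l:ℤ)*j^2 - (r:ℤ)*j)) * E with hΦdef
  -- Limit A : Φ → exp (Sw + (Su + Sv))
  have hTA : Tendsto Φ atTop (𝓝 (Complex.exp (Sw + (Su + Sv)))) := by
    have hfj : ∀ m : ℕ, Φ m = Complex.exp (∑ k ∈ Finset.range m,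
        (Complex.log (1 + q^(l*(2*k+1) - r)) + Complex.log (1 + q^(l*(2*k+1) + r)))) * E := by
      intro m
      have hsum_eq := fjtp q hq0 l r ht m
      rw [← htdef] at hsum_eq
      simp only [hΦdef]
      rw [hsum_eq]
      congr 1
      calc ∏ k ∈ Finset.range m, ((1 + q ^ ((l:ℤ)*(2*(k:ℤ)+1) - (r:ℤ)))
              * (1 + q ^ ((l:ℤ)*(2*(k:ℤ)+1) + (r:ℤ))))
          = ∏ k ∈ Finset.range m, ((1 + q^(l*(2*k+1) - r)) * (1 + q^(l*(2*k+1) + r))) := by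
            refine Finset.prod_congr rfl fun k _ => ?_
            rw [hz1 k, hz2 k]
        _ = (∏ k ∈ Finset.range m, (1 + q^(l*(2*k+1) - r)))
              * ∏ k ∈ Finset.range m, (1 + q^(l*(2*k+1) + r)) := Finset.prod_mul_distrib
        _ = Complex.exp (∑ k ∈ Finset.range m, Complex.log (1 + q^(l*(2*k+1) - r)))
              * Complex.exp (∑ k ∈ Finset.range m, Complex.log (1 + q^(l*(2*k+1) + r))) := by
            rw [prod_eq_cexp _ _ fun k _ => hu_ne k, prod_eq_cexp _ _ fun k _ => hv_ne k]
        _ = Complex.exp ((∑ k ∈ Finset.range m, Complex.log (1 + q^(l*(2*k+1) - r)))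
              + ∑ k ∈ Finset.range m, Complex.log (1 + q^(l*(2*k+1) + r))) :=
            (Complex.exp_add _ _).symm
        _ = Complex.exp (∑ k ∈ Finset.range m,
              (Complex.log (1 + q^(l*(2*k+1) - r)) + Complex.log (1 + q^(l*(2*k+1) + r)))) := by
            rw [Finset.sum_add_distrib]
    have hS : Tendsto (fun m : ℕ => ∑ k ∈ Finset.range m,
        (Complex.log (1 + q^(l*(2*k+1) - r)) + Complex.log (1 + q^(l*(2*k+1) + r))))
        atTop (𝓝 (Su + Sv)) := (hsu.hasSum.add hsv.hasSum).tendsto_sum_nat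
    have := (hS.cexp).mul_const E
    rw [show Complex.exp (Su + Sv) * E = Complex.exp (Sw + (Su + Sv)) by
      rw [hEdef, ← Complex.exp_add]; congr 1; ring] at this
    exact Tendsto.congr (fun m => (hfj m).symm) this
  -- Limit B : Φ → ∑' j, q^(e j)  (dominated convergence)
  have hjle : ∀ j : ℤ, (j.natAbs : ℤ) ≤ (l:ℤ)*j^2 - (r:ℤ)*j := by
    intro j
    have hl1 : (r:ℤ) + 1 ≤ (l:ℤ) := by exact_mod_cast hrl
    have hr1 : (1:ℤ) ≤ (r:ℤ) := by exact_mod_cast hr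
    rcases le_or_gt 0 j with hj | hj
    · rw [Int.natAbs_of_nonneg hj]
      rcases eq_or_lt_of_le hj with h | h
      · simp [← h]
      · have h1 : (1:ℤ) ≤ j := h
        have h2 : (l:ℤ) ≤ (l:ℤ)*j := le_mul_of_one_le_right (by linarith) h1
        nlinarith [mul_nonneg (by linarith : (0:ℤ) ≤ j) (by linarith : (0:ℤ) ≤ (l:ℤ)*j - r - 1)]
    · have habs : (j.natAbs : ℤ) = -j := by omega
      rw [habs]
      have h1 : (1:ℤ) ≤ -j := by omega
      have h2 : (l:ℤ) ≤ (l:ℤ)*(-j) := le_mul_of_one_le_right (by linarith) h1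
      nlinarith [mul_nonneg (by linarith : (0:ℤ) ≤ -j) (by linarith : (0:ℤ) ≤ (l:ℤ)*(-j) + r - 1)]
  have hsint : Summable (fun j : ℤ => ‖q‖ ^ j.natAbs) := by
    refine Summable.of_nat_of_neg_add_one ?_ ?_
    · refine (summable_geometric_of_lt_one hρ0 hq).congr fun n => ?_
      simp
    · refine ((summable_geometric_of_lt_one hρ0 hq).mul_right ‖q‖).congr fun n => ?_
      rw [show ((-((n:ℤ)+1)).natAbs) = n+1 by omega, pow_succ]
  have hbound_sum : Summable (fun j : ℤ => CC t * ‖E‖ * ‖q‖ ^ j.natAbs) :=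
    hsint.mul_left _
  have hF_bound : ∀ m : ℕ, ∀ j : ℤ,
      ‖G t m j * q ^ ((l:ℤ)*j^2 - (r:ℤ)*j) * E‖ ≤ CC t * ‖E‖ * ‖q‖ ^ j.natAbs := by
    intro m j
    rw [norm_mul, norm_mul]
    have h1 : ‖G t m j‖ ≤ CC t := norm_G_le htn m j
    have h2 : ‖q ^ ((l:ℤ)*j^2 - (r:ℤ)*j)‖ ≤ ‖q‖ ^ j.natAbs := by
      rw [norm_zpow]
      have := zpow_le_zpow_right_of_le_one₀ hρpos hq.le (hjle j)
      rwa [zpow_natCast] at this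
    calc ‖G t m j‖ * ‖q ^ ((l:ℤ)*j^2 - (r:ℤ)*j)‖ * ‖E‖
        ≤ CC t * ‖q‖ ^ j.natAbs * ‖E‖ := by
          refine mul_le_mul_of_nonneg_right ?_ (norm_nonneg E)
          exact mul_le_mul h1 h2 (norm_nonneg _) (CC_nonneg t)
      _ = CC t * ‖E‖ * ‖q‖ ^ j.natAbs := by ring
  have hF_lim : ∀ j : ℤ, Tendsto (fun m : ℕ => G t m j * q ^ ((l:ℤ)*j^2 - (r:ℤ)*j) * E)
      atTop (𝓝 (q ^ ((l:ℤ)*j^2 - (r:ℤ)*j))) := by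
    intro j
    have := (GE_tendsto ht0 htn j).mul_const (q ^ ((l:ℤ)*j^2 - (r:ℤ)*j))
    rw [one_mul] at this
    refine Tendsto.congr (fun m => ?_) this
    ring
  have hTB : Tendsto Φ atTop (𝓝 (∑' j : ℤ, q ^ ((l:ℤ)*j^2 - (r:ℤ)*j))) := by
    have hΦ_tsum : ∀ m : ℕ, Φ m = ∑' j : ℤ, G t m j * q ^ ((l:ℤ)*j^2 - (r:ℤ)*j) * E := by
      intro m
      simp only [hΦdef]
      rw [Finset.sum_mul]
      refine (tsum_eq_sum fun j hj => ?_).symm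
      simp only [Finset.mem_Icc] at hj
      rcases (by omega : j < -(m:ℤ) ∨ (m:ℤ) < j) with h | h
      · rw [G_eq_zero_left h, zero_mul, zero_mul]
      · rw [G_eq_zero_right h, zero_mul, zero_mul]
    have := tendsto_tsum_of_dominated_convergence hbound_sum hF_lim
      (Eventually.of_forall fun m => hF_bound m)
    exact Tendsto.congr (fun m => (hΦ_tsum m).symm) this
  have := tendsto_nhds_unique hTB hTA
  rw [this, hSwdef, hSudef, hSvdef]

end JTPaux


open Filter Topology JTPaux

/-- Quintuple-product specialization: for `0 < r < l` and `|q| < 1`,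
`∑_{n∈ℤ} q^{ln²-rn} = ∏_{n≥1} (1-q^{2ln})(1-q^{4ln-2(l-r)})(1-q^{4l(n-1)+2(l-r)})
  / ((1-q^{2ln-l-r})(1-q^{2l(n-1)+l+r}))`. -/
theorem stmt_7 (q : ℂ) (hq : ‖q‖ < 1) (l r : ℕ) (hr : 0 < r) (hrl : r < l) :
    (∑' n : ℤ, q ^ ((l : ℤ) * n ^ 2 - (r : ℤ) * n)) =
      ∏' n : ℕ,
        ((1 - q ^ (2 * l * (n + 1))) * (1 - q ^ (4 * l * (n + 1) - 2 * (l - r))) *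
            (1 - q ^ (4 * l * n + 2 * (l - r)))) /
          ((1 - q ^ (2 * l * (n + 1) - (l + r))) * (1 - q ^ (2 * l * n + (l + r)))) := by
  have hl : 0 < l := lt_trans hr hrl
  by_cases hq0 : q = 0
  · -- degenerate case q = 0
    subst hq0
    have hLHS : (∑' n : ℤ, (0:ℂ) ^ ((l : ℤ) * n ^ 2 - (r : ℤ) * n)) = 1 := by
      rw [tsum_eq_single 0 ?_]
      · norm_num
      · intro n hn
        have h1 : (r:ℤ) < l := by exact_mod_cast hrl
        have h2 : (0:ℤ) < r := by exact_mod_cast hr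
        have hlz : (0:ℤ) < l := by exact_mod_cast hl
        have hpos : 0 < (l:ℤ)*n^2 - (r:ℤ)*n := by
          rcases lt_or_gt_of_ne hn with h | h
          · have hln : (l:ℤ)*n < 0 := by nlinarith [mul_pos hlz (show (0:ℤ) < -n by linarith)]
            nlinarith [mul_pos (show (0:ℤ) < -n by linarith) (show (0:ℤ) < (r:ℤ) - l*n by linarith)]
          · have hln : (l:ℤ) ≤ (l:ℤ)*n := by nlinarith
            nlinarith [mul_pos (show (0:ℤ) < n by linarith) (show (0:ℤ) < (l:ℤ)*n - r by linarith)]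
        exact zero_zpow _ hpos.ne'
    rw [hLHS]
    have hterm : ∀ n : ℕ,
        ((1 - (0:ℂ) ^ (2 * l * (n + 1))) * (1 - (0:ℂ) ^ (4 * l * (n + 1) - 2 * (l - r))) *
            (1 - (0:ℂ) ^ (4 * l * n + 2 * (l - r)))) /
          ((1 - (0:ℂ) ^ (2 * l * (n + 1) - (l + r))) * (1 - (0:ℂ) ^ (2 * l * n + (l + r)))) = 1 := by
      intro n
      have a1 : 2*l*(n+1) = 2*(l*n) + 2*l := by ring
      have a2 : 4*l*(n+1) = 4*(l*n) + 4*l := by ring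
      have a3 : 4*l*n = 4*(l*n) := by ring
      have a4 : 2*l*n = 2*(l*n) := by ring
      have h1 : 2*l*(n+1) ≠ 0 := by omega
      have h2 : 4*l*(n+1) - 2*(l-r) ≠ 0 := by omega
      have h3 : 4*l*n + 2*(l-r) ≠ 0 := by omega
      have h4 : 2*l*(n+1) - (l+r) ≠ 0 := by omega
      have h5 : 2*l*n + (l+r) ≠ 0 := by omega
      rw [zero_pow h1, zero_pow h2, zero_pow h3, zero_pow h4, zero_pow h5]
      norm_num
    rw [show (fun n : ℕ =>
        ((1 - (0:ℂ) ^ (2 * l * (n + 1))) * (1 - (0:ℂ) ^ (4 * l * (n + 1) - 2 * (l - r))) *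
            (1 - (0:ℂ) ^ (4 * l * n + 2 * (l - r)))) /
          ((1 - (0:ℂ) ^ (2 * l * (n + 1) - (l + r))) * (1 - (0:ℂ) ^ (2 * l * n + (l + r)))))
        = fun _ : ℕ => (1:ℂ) from funext hterm, tprod_one]
  · -- main case
    have hρ0 : 0 ≤ ‖q‖ := norm_nonneg q
    have hqpow : ∀ n : ℕ, 1 ≤ n → ‖q ^ n‖ < 1 := by
      intro n hn
      rw [norm_pow]
      exact pow_lt_one₀ hρ0 hq (by omega)
    have ht : ∀ k : ℕ, 1 - (q^(2*l))^(k+1) ≠ 0 := by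
      intro k
      refine one_sub_ne ?_
      rw [← pow_mul]
      refine hqpow _ ?_
      have : 0 < 2*l*(k+1) := by positivity
      omega
    have hAu_ge : ∀ k : ℕ, k + 1 ≤ l*(2*k+1) - r := by
      intro k
      have h := Nat.mul_le_mul_right (2*k+1) (show r+1 ≤ l from hrl)
      have h2 : (r+1)*(2*k+1) = 2*r*k + r + 2*k + 1 := by ring
      omega
    have hBu_ge : ∀ k : ℕ, k + 1 ≤ l*(2*k+1) + r := by
      intro k
      have h := Nat.mul_le_mul_right (2*k+1) (show 1 ≤ l by omega)
      omega
    have hu_ne : ∀ k : ℕ, (1 : ℂ) + q^(l*(2*k+1) - r) ≠ 0 := by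
      intro k
      have := hqpow _ (le_trans (by omega) (hAu_ge k))
      intro h
      have h2 : q^(l*(2*k+1) - r) = -1 := by linear_combination h
      rw [h2] at this
      simp at this
    have hv_ne : ∀ k : ℕ, (1 : ℂ) + q^(l*(2*k+1) + r) ≠ 0 := by
      intro k
      have := hqpow _ (le_trans (by omega) (hBu_ge k))
      intro h
      have h2 : q^(l*(2*k+1) + r) = -1 := by linear_combination h
      rw [h2] at this
      simp at this
    have hw_ne : ∀ k : ℕ, (1 : ℂ) - (q^(2*l))^(k+1) ≠ 0 := ht
    -- summability of log series
    have hsw : Summable (fun i : ℕ => Complex.log (1 - (q^(2*l))^(i+1))) := by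
      have htn : ‖q^(2*l)‖ < 1 := hqpow _ (by omega)
      refine summable_log (norm_nonneg _) htn _ fun k => ?_
      rw [show (1:ℂ) - (q^(2*l))^(k+1) - 1 = -((q^(2*l))^(k+1)) by ring, norm_neg, norm_pow]
    have hsu : Summable (fun k : ℕ => Complex.log (1 + q^(l*(2*k+1) - r))) := by
      refine summable_log hρ0 hq _ fun k => ?_
      rw [show (1:ℂ) + q^(l*(2*k+1) - r) - 1 = q^(l*(2*k+1) - r) by ring, norm_pow]
      exact pow_le_pow_of_le_one hρ0 hq.le (hAu_ge k)
    have hsv : Summable (fun k : ℕ => Complex.log (1 + q^(l*(2*k+1) + r))) := by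
      refine summable_log hρ0 hq _ fun k => ?_
      rw [show (1:ℂ) + q^(l*(2*k+1) + r) - 1 = q^(l*(2*k+1) + r) by ring, norm_pow]
      exact pow_le_pow_of_le_one hρ0 hq.le (hBu_ge k)
    -- product representation of RHS
    have hsum3 : HasSum (fun n : ℕ => Complex.log (1 - (q^(2*l))^(n+1))
          + (Complex.log (1 + q^(l*(2*n+1) - r)) + Complex.log (1 + q^(l*(2*n+1) + r))))
        ((∑' i : ℕ, Complex.log (1 - (q^(2*l))^(i+1)))
          + ((∑' k : ℕ, Complex.log (1 + q^(l*(2*k+1) - r)))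
            + (∑' k : ℕ, Complex.log (1 + q^(l*(2*k+1) + r))))) :=
      hsw.hasSum.add (hsu.hasSum.add hsv.hasSum)
    have hprod := hsum3.cexp
    have hfun : (Complex.exp ∘ fun n : ℕ => Complex.log (1 - (q^(2*l))^(n+1))
          + (Complex.log (1 + q^(l*(2*n+1) - r)) + Complex.log (1 + q^(l*(2*n+1) + r))))
        = fun n : ℕ => (1 - (q^(2*l))^(n+1)) * ((1 + q^(l*(2*n+1) - r)) * (1 + q^(l*(2*n+1) + r))) := by
      funext n
      simp only [Function.comp]
      rw [Complex.exp_add, Complex.exp_add, Complex.exp_log (hw_ne n),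
        Complex.exp_log (hu_ne n), Complex.exp_log (hv_ne n)]
    rw [hfun] at hprod
    -- termwise equality of the statement product with w*u*v
    have hterm : ∀ n : ℕ,
        ((1 - q ^ (2 * l * (n + 1))) * (1 - q ^ (4 * l * (n + 1) - 2 * (l - r))) *
            (1 - q ^ (4 * l * n + 2 * (l - r)))) /
          ((1 - q ^ (2 * l * (n + 1) - (l + r))) * (1 - q ^ (2 * l * n + (l + r))))
        = (1 - (q^(2*l))^(n+1)) * ((1 + q^(l*(2*n+1) - r)) * (1 + q^(l*(2*n+1) + r))) := by
      intro n
      have hAu_ne : (1:ℂ) - q^(l*(2*n+1) - r) ≠ 0 :=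
        one_sub_ne (hqpow _ (le_trans (by omega) (hAu_ge n)))
      have hBu_ne : (1:ℂ) - q^(l*(2*n+1) + r) ≠ 0 :=
        one_sub_ne (hqpow _ (le_trans (by omega) (hBu_ge n)))
      have a1 : 2*l*(n+1) = 2*(l*n) + 2*l := by ring
      have a2 : 4*l*(n+1) = 4*(l*n) + 4*l := by ring
      have a3 : 4*l*n = 4*(l*n) := by ring
      have a4 : 2*l*n = 2*(l*n) := by ring
      have a5 : l*(2*n+1) = 2*(l*n) + l := by ring
      have e2 : 4*l*(n+1) - 2*(l-r) = (l*(2*n+1) + r)*2 := by omega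
      have e3 : 4*l*n + 2*(l-r) = (l*(2*n+1) - r)*2 := by omega
      have e4 : 2*l*(n+1) - (l+r) = l*(2*n+1) - r := by omega
      have e5 : 2*l*n + (l+r) = l*(2*n+1) + r := by omega
      rw [e2, e3, e4, e5, pow_mul q (2*l) (n+1), pow_mul q (l*(2*n+1)+r) 2,
        pow_mul q (l*(2*n+1)-r) 2]
      field_simp
      ring
    calc (∑' n : ℤ, q ^ ((l : ℤ) * n ^ 2 - (r : ℤ) * n))
        = Complex.exp ((∑' i : ℕ, Complex.log (1 - (q^(2*l))^(i+1)))
            + ((∑' k : ℕ, Complex.log (1 + q^(l*(2*k+1) - r)))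
              + (∑' k : ℕ, Complex.log (1 + q^(l*(2*k+1) + r))))) :=
          triple q hq0 hq l r hr hrl
      _ = ∏' n : ℕ, (1 - (q^(2*l))^(n+1)) * ((1 + q^(l*(2*n+1) - r)) * (1 + q^(l*(2*n+1) + r))) :=
          (hprod.tprod_eq).symm
      _ = _ := (tprod_congr hterm).symm
end

section
/- Let q be a complex number with |q| < 1. Then ∑_{n ∈ ℤ} q^{2n²−n} = ∏_{n=1}^∞ (1−q^{2n})²/(1−q^n) (Gauss's identity). -/
open scoped BigOperators

open Finset Filter Complex Topology

namespace GaussAux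
/-- If `∑ ‖a n‖ < ∞` and each `‖a n‖ < 1`, then `∏ (1 + a n)` converges to a
nonzero value. -/
lemma hasProd_one_add {a : ℕ → ℂ} (h1 : ∀ n, ‖a n‖ < 1)
    (hs : Summable fun n => ‖a n‖) :
    HasProd (fun n => 1 + a n) (∏' n, (1 + a n)) ∧ (∏' n, (1 + a n)) ≠ 0 := by
  have hne : ∀ n, 1 + a n ≠ 0 := by
    intro n h
    have h2 : a n = -1 := by linear_combination h
    have := h1 n
    rw [h2] at this; simp at this
  have hlog : Summable fun n => Complex.log (1 + a n) := by
    have htend : Tendsto (fun n => ‖a n‖) atTop (𝓝 0) := hs.tendsto_atTop_zero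
    have hev : ∀ᶠ n in atTop, ‖Complex.log (1 + a n)‖ ≤ (3/2) * ‖a n‖ := by
      filter_upwards [htend.eventually_le_const (by norm_num : (0:ℝ) < 1/2)] with n hn
      exact Complex.norm_log_one_add_half_le_self hn
    exact (hs.mul_left (3/2)).of_norm_bounded_eventually_nat hev
  have key := (Complex.hasProd_of_hasSum_log hne hlog.hasSum).multipliable.hasProd
  refine ⟨key, ?_⟩
  have := Complex.cexp_tsum_eq_tprod hne hlog
  rw [← this]
  exact Complex.exp_ne_zero _

/-- Summability of geometric-type sequences `‖q‖^(c*n+d)`. -/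
lemma summable_norm_pow {q : ℂ} (hq : ‖q‖ < 1) {c : ℕ} (hc : 0 < c) (d : ℕ) :
    Summable fun n : ℕ => ‖q ^ (c * n + d)‖ := by
  have h0 : (0:ℝ) ≤ ‖q‖ := norm_nonneg q
  apply (summable_geometric_of_lt_one h0 hq).of_nonneg_of_le
    (fun n => by positivity)
  intro n
  rw [norm_pow]
  calc ‖q‖ ^ (c * n + d) ≤ ‖q‖ ^ n := by
        apply pow_le_pow_of_le_one h0 hq.le
        nlinarith
    _ = ‖q‖ ^ n := rfl

/-- Partial product `∏_{i=1}^n (1 - Q^i)`. -/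
def P (Q : ℂ) (n : ℕ) : ℂ := ∏ i ∈ range n, (1 - Q ^ (i + 1))

/-- Gaussian binomial coefficient as a complex number. -/
noncomputable def GB (Q : ℂ) (m k : ℕ) : ℂ :=
  if k ≤ m then P Q m / (P Q k * P Q (m - k)) else 0

variable {Q : ℂ}

lemma one_sub_pow_ne (hQ : ‖Q‖ < 1) (i : ℕ) : 1 - Q ^ (i + 1) ≠ 0 := by
  intro h
  have h2 : Q ^ (i+1) = 1 := by linear_combination -h
  have : ‖Q ^ (i+1)‖ < 1 := by
    rw [norm_pow]
    exact pow_lt_one₀ (norm_nonneg Q) hQ (Nat.succ_ne_zero i)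
  rw [h2] at this; simp at this

lemma P_ne (hQ : ‖Q‖ < 1) (n : ℕ) : P Q n ≠ 0 :=
  prod_ne_zero_iff.2 fun i _ => one_sub_pow_ne hQ i

lemma P_succ (n : ℕ) : P Q (n + 1) = P Q n * (1 - Q ^ (n + 1)) :=
  prod_range_succ _ n

lemma P_zero : P Q 0 = 1 := by simp [P]

lemma GB_zero (hQ : ‖Q‖ < 1) (m : ℕ) : GB Q m 0 = 1 := by
  rw [GB, if_pos (Nat.zero_le m), Nat.sub_zero, P_zero, one_mul, div_self (P_ne hQ m)]

lemma GB_self (hQ : ‖Q‖ < 1) (m : ℕ) : GB Q m m = 1 := by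
  rw [GB, if_pos le_rfl, Nat.sub_self, P_zero, mul_one, div_self (P_ne hQ m)]

lemma GB_of_gt {m k : ℕ} (h : m < k) : GB Q m k = 0 := by
  simp [GB, Nat.not_le.2 h]

lemma pascal (hQ : ‖Q‖ < 1) (k j : ℕ) :
    GB Q (k + j + 1) (k + 1) = GB Q (k + j) (k + 1) + Q ^ j * GB Q (k + j) k := by
  cases j with
  | zero =>
    simp only [Nat.add_zero]
    rw [GB_of_gt (Nat.lt_succ_self k), GB_self hQ, GB_self hQ]
    simp
  | succ j =>
    have h1 : (k + 1 : ℕ) ≤ k + (j+1) + 1 := by omega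
    have h2 : (k + 1 : ℕ) ≤ k + (j+1) := by omega
    have h3 : (k : ℕ) ≤ k + (j+1) := by omega
    rw [GB, GB, GB, if_pos h1, if_pos h2, if_pos h3]
    have e1 : k + (j+1) + 1 - (k+1) = j + 1 := by omega
    have e2 : k + (j+1) - (k+1) = j := by omega
    have e3 : k + (j+1) - k = j + 1 := by omega
    rw [e1, e2, e3]
    have hP1 : P Q (k + (j+1) + 1) = P Q (k + (j+1)) * (1 - Q ^ (k + (j+1) + 1)) := P_succ _
    have hP2 : P Q (j + 1) = P Q j * (1 - Q ^ (j + 1)) := P_succ _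
    have hP3 : P Q (k + 1) = P Q k * (1 - Q ^ (k + 1)) := P_succ _
    rw [hP1, hP2, hP3]
    have n1 := P_ne hQ (k + (j+1))
    have n2 := P_ne hQ j
    have n3 := P_ne hQ k
    have n4 := one_sub_pow_ne hQ j
    have n5 := one_sub_pow_ne hQ k
    field_simp
    ring

lemma pascal' (hQ : ‖Q‖ < 1) {t m : ℕ} (h : t ≤ m) :
    GB Q (m + 1) (t + 1) = GB Q m (t + 1) + Q ^ (m - t) * GB Q m t := by
  obtain ⟨j, rfl⟩ : ∃ j, m = t + j := ⟨m - t, by omega⟩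
  have : t + j - t = j := by omega
  rw [this]
  exact pascal hQ t j

/-- Cauchy's q-binomial theorem. -/
theorem cauchy (hQ : ‖Q‖ < 1) (m : ℕ) (x : ℂ) :
    ∏ j ∈ range m, (1 + x * Q ^ j) =
      ∑ k ∈ range (m + 1), GB Q m k * Q ^ (k.choose 2) * x ^ k := by
  induction m with
  | zero => simp [GB_zero hQ]
  | succ m ih =>
    rw [prod_range_succ, ih]
    rw [Finset.sum_range_succ' (fun k => GB Q (m+1) k * Q ^ (k.choose 2) * x ^ k) (m+1)]
    have hps : ∀ t ∈ range (m + 1),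
        GB Q (m+1) (t+1) * Q ^ ((t+1).choose 2) * x ^ (t+1) =
          GB Q m (t+1) * Q ^ ((t+1).choose 2) * x ^ (t+1) +
            (GB Q m t * Q ^ (t.choose 2) * x ^ t) * (x * Q ^ m) := by
      intro t ht
      rw [mem_range] at ht
      rw [pascal' hQ (by omega : t ≤ m)]
      have hch : (t+1).choose 2 = t.choose 2 + t := by
        rw [Nat.choose_succ_succ, Nat.choose_one_right, Nat.add_comm]
      rw [hch]
      have hpow : Q ^ (m - t) * Q ^ (t.choose 2 + t) = Q ^ (t.choose 2) * Q ^ m := by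
        rw [← pow_add, ← pow_add]
        congr 1
        omega
      linear_combination (GB Q m t * x ^ (t+1)) * hpow
    rw [Finset.sum_congr rfl hps, Finset.sum_add_distrib, ← Finset.sum_mul]
    have h0 : GB Q (m+1) 0 * Q ^ (Nat.choose 0 2) * x ^ 0 = GB Q m 0 * Q ^ (Nat.choose 0 2) * x ^ 0 := by
      rw [GB_zero hQ, GB_zero hQ]
    rw [h0]
    have hA := Finset.sum_range_succ' (fun k => GB Q m k * Q ^ (k.choose 2) * x ^ k) (m+1)
    have hB := Finset.sum_range_succ (fun k => GB Q m k * Q ^ (k.choose 2) * x ^ k) (m+1)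
    rw [GB_of_gt (Nat.lt_succ_self m)] at hB
    linear_combination hA - hB


/-- The exponent `2(k-N)² - (k-N)` as a natural number. -/
def E (N k : ℕ) : ℕ := (2 * ((k : ℤ) - N) ^ 2 - ((k : ℤ) - N)).toNat

lemma two_mul_sq_sub_nonneg (t : ℤ) : 0 ≤ 2 * t ^ 2 - t := by
  have h : 2 * t ^ 2 - t = t * (2 * t - 1) := by ring
  rcases le_or_gt t 0 with ht | ht
  · nlinarith [sq_nonneg t]
  · nlinarith [ht]

lemma E_cast (N k : ℕ) : (E N k : ℤ) = 2 * ((k : ℤ) - N) ^ 2 - ((k : ℤ) - N) :=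
  Int.toNat_of_nonneg (two_mul_sq_sub_nonneg _)

lemma two_choose_two (k : ℕ) : 2 * k.choose 2 = k * (k - 1) := by
  cases k with
  | zero => simp
  | succ n =>
    rw [Nat.choose_two_right, Nat.succ_sub_one]
    have h2 : 2 ∣ (n + 1) * n := by
      obtain ⟨c, hc⟩ := Nat.even_mul_succ_self n
      exact ⟨c, by rw [Nat.mul_comm]; omega⟩
    exact Nat.mul_div_cancel' h2

lemma exp_identity (N k : ℕ) :
    2 * N ^ 2 + N + 4 * k.choose 2 + k = E N k + 4 * (N * k) := by
  have hE := E_cast N k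
  rcases Nat.eq_zero_or_pos k with rfl | hk
  · have h : (E N 0 : ℤ) = ((2 * N ^ 2 + N : ℕ) : ℤ) := by
      rw [hE]; push_cast; ring
    have h2 := Nat.cast_injective (R := ℤ) h
    simp [h2]
  · have h2cZ : (4 * k.choose 2 : ℤ) = 2 * (k : ℤ) * ((k : ℤ) - 1) := by
      have := two_choose_two k
      zify [hk] at this
      linarith
    apply Nat.cast_injective (R := ℤ)
    push_cast [hE]
    linear_combination h2cZ

variable {q : ℂ}

lemma sum_4i3 (N : ℕ) : ∑ i ∈ range N, (4 * i + 3) = 2 * N ^ 2 + N := by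
  induction N with
  | zero => simp
  | succ n ih => rw [Finset.sum_range_succ, ih]; ring

lemma pow_prod_eq (N : ℕ) :
    q ^ (2 * N ^ 2 + N) = ∏ i ∈ range N, q ^ (4 * N - 4 * i - 1) := by
  rw [Finset.prod_pow_eq_pow_sum]
  congr 1
  have h1 : ∀ i ∈ range N, 4 * N - 4 * i - 1 = 4 * (N - 1 - i) + 3 := by
    intro i hi; rw [mem_range] at hi; omega
  rw [Finset.sum_congr rfl h1,
    Finset.sum_range_reflect (fun i => 4 * i + 3) N, sum_4i3]

lemma prod_side (hq0 : q ≠ 0) (N : ℕ) :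
    q ^ (2 * N ^ 2 + N) *
      ∏ j ∈ range (2 * N), (1 + q / (q ^ 4) ^ N * (q ^ 4) ^ j) =
    ∏ i ∈ range N, ((1 + q ^ (4 * i + 1)) * (1 + q ^ (4 * i + 3))) := by
  have hQN : ((q : ℂ) ^ 4) ^ N ≠ 0 := pow_ne_zero _ (pow_ne_zero _ hq0)
  rw [two_mul N, Finset.prod_range_add, pow_prod_eq, ← mul_assoc, ← Finset.prod_mul_distrib]
  have h1 : ∀ i ∈ range N,
      q ^ (4 * N - 4 * i - 1) * (1 + q / (q ^ 4) ^ N * (q ^ 4) ^ i) =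
        1 + q ^ (4 * (N - 1 - i) + 3) := by
    intro i hi
    rw [mem_range] at hi
    have key : q ^ (4 * N - 4 * i - 1) * (q / (q ^ 4) ^ N * (q ^ 4) ^ i) = 1 := by
      have hpw : q ^ (4 * N - 4 * i - 1) * q * (q ^ 4) ^ i = (q ^ 4) ^ N := by
        rw [← pow_succ, ← pow_mul, ← pow_add, ← pow_mul]
        congr 1
        omega
      calc q ^ (4 * N - 4 * i - 1) * (q / (q ^ 4) ^ N * (q ^ 4) ^ i)
          = (q ^ (4 * N - 4 * i - 1) * q * (q ^ 4) ^ i) / (q ^ 4) ^ N := by ring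
        _ = (q ^ 4) ^ N / (q ^ 4) ^ N := by rw [hpw]
        _ = 1 := div_self hQN
    have ha : 4 * N - 4 * i - 1 = 4 * (N - 1 - i) + 3 := by omega
    rw [mul_add, mul_one, key, ha, add_comm]
  have h2 : ∀ i ∈ range N,
      (1 + q / (q ^ 4) ^ N * (q ^ 4) ^ (N + i)) = 1 + q ^ (4 * i + 1) := by
    intro i _
    congr 1
    rw [pow_add, div_mul_eq_mul_div, mul_comm ((q^4)^N) ((q^4)^i), ← mul_assoc,
      mul_div_assoc, div_self hQN, mul_one, ← pow_mul, ← pow_succ']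
  rw [Finset.prod_congr rfl h1, Finset.prod_congr rfl h2,
    Finset.prod_range_reflect (fun i => 1 + q ^ (4 * i + 3)) N,
    ← Finset.prod_mul_distrib]
  exact Finset.prod_congr rfl fun i _ => mul_comm _ _

lemma sum_side (hq0 : q ≠ 0) (N : ℕ) :
    q ^ (2 * N ^ 2 + N) *
      ∑ k ∈ range (2 * N + 1),
        GB (q ^ 4) (2 * N) k * (q ^ 4) ^ (k.choose 2) * (q / (q ^ 4) ^ N) ^ k =
    ∑ k ∈ range (2 * N + 1), GB (q ^ 4) (2 * N) k * q ^ (E N k) := by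
  rw [Finset.mul_sum]
  refine Finset.sum_congr rfl fun k _ => ?_
  have h4 : (q : ℂ) ^ (4 * (N * k)) ≠ 0 := pow_ne_zero _ hq0
  have hmain : q ^ (2 * N ^ 2 + N) * q ^ (4 * k.choose 2) * q ^ k =
      q ^ (E N k) * q ^ (4 * (N * k)) := by
    rw [← pow_add, ← pow_add, ← pow_add, exp_identity]
  calc q ^ (2 * N ^ 2 + N) *
        (GB (q ^ 4) (2 * N) k * (q ^ 4) ^ (k.choose 2) * (q / (q ^ 4) ^ N) ^ k)
      = GB (q ^ 4) (2 * N) k *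
          ((q ^ (2 * N ^ 2 + N) * q ^ (4 * k.choose 2) * q ^ k) / q ^ (4 * (N * k))) := by
        rw [div_pow, ← pow_mul, ← pow_mul, ← pow_mul]
        ring
    _ = GB (q ^ 4) (2 * N) k * ((q ^ (E N k) * q ^ (4 * (N * k))) / q ^ (4 * (N * k))) := by
        rw [hmain]
    _ = GB (q ^ 4) (2 * N) k * q ^ (E N k) := by
        rw [mul_div_cancel_right₀ _ h4]

/-- The finite Gauss identity. -/
theorem finite_gauss (hq : ‖q‖ < 1) (hq0 : q ≠ 0) (N : ℕ) :
    ∏ i ∈ range N, ((1 + q ^ (4 * i + 1)) * (1 + q ^ (4 * i + 3))) =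
      ∑ k ∈ range (2 * N + 1), GB (q ^ 4) (2 * N) k * q ^ (E N k) := by
  have hQ : ‖q ^ 4‖ < 1 := by
    rw [norm_pow]
    exact pow_lt_one₀ (norm_nonneg q) hq (by norm_num)
  have := cauchy hQ (2 * N) (q / (q ^ 4) ^ N)
  rw [← prod_side hq0 N, ← sum_side hq0 N, this]


variable {q Q : ℂ}

/-- Convenient form: products of `1 ± q^(c*n+d)`. -/
lemma hasProd_pm (hq : ‖q‖ < 1) {c d : ℕ} (hc : 0 < c) (hd : 0 < d) (s : ℂ)
    (hs : ‖s‖ = 1) :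
    HasProd (fun n => 1 + s * q ^ (c * n + d)) (∏' n, (1 + s * q ^ (c * n + d))) ∧
      (∏' n, (1 + s * q ^ (c * n + d))) ≠ 0 := by
  apply hasProd_one_add
  · intro n
    rw [norm_mul, hs, one_mul, norm_pow]
    exact pow_lt_one₀ (norm_nonneg q) hq (by omega)
  · have : (fun n => ‖s * q ^ (c * n + d)‖) = fun n => ‖q ^ (c * n + d)‖ := by
      funext n; rw [norm_mul, hs, one_mul]
    rw [this]
    exact summable_norm_pow hq hc d

section Bounds

lemma exp_bound_one_sub {R x : ℝ} (hR : R < 1) (hx0 : 0 ≤ x) (hxR : x ≤ R) :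
    Real.exp (-(x / (1 - R))) ≤ 1 - x := by
  have hRpos : (0:ℝ) < 1 - R := by linarith
  set y := x / (1 - R) with hy
  have hyx : y * (1 - R) = x := div_mul_cancel₀ x hRpos.ne'
  have hy0 : 0 ≤ y := div_nonneg hx0 hRpos.le
  have e1 : 1 + y ≤ Real.exp y := by
    have := Real.add_one_le_exp y; linarith
  have e2 : 1 ≤ Real.exp y * (1 - x) := by
    have h1x : 0 ≤ 1 - x := by linarith
    have := mul_le_mul_of_nonneg_right e1 h1x
    nlinarith [mul_nonneg hy0 (show 0 ≤ R - x by linarith)]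
  have h3 : Real.exp (-y) * Real.exp y = 1 := by
    rw [← Real.exp_add]; simp
  nlinarith [mul_le_mul_of_nonneg_left e2 (Real.exp_pos (-y)).le, Real.exp_pos (-y)]

lemma geo_partial_le {R : ℝ} (h0 : 0 ≤ R) (h1 : R < 1) (n : ℕ) :
    ∑ i ∈ range n, R ^ (i + 1) ≤ R / (1 - R) := by
  have hsum : ∑ i ∈ range n, R ^ (i + 1) = R * ∑ i ∈ range n, R ^ i := by
    rw [Finset.mul_sum]; exact Finset.sum_congr rfl fun i _ => by rw [pow_succ']
  rw [hsum, div_eq_mul_inv]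
  apply mul_le_mul_of_nonneg_left _ h0
  calc ∑ i ∈ range n, R ^ i ≤ ∑' i : ℕ, R ^ i :=
        Summable.sum_le_tsum _ (fun i _ => pow_nonneg h0 i) (summable_geometric_of_lt_one h0 h1)
    _ = (1 - R)⁻¹ := tsum_geometric_of_lt_one h0 h1

lemma P_norm_le (hQ : ‖Q‖ < 1) (n : ℕ) : ‖P Q n‖ ≤ Real.exp (‖Q‖ / (1 - ‖Q‖)) := by
  set R := ‖Q‖
  have h0 : 0 ≤ R := norm_nonneg Q
  rw [P, norm_prod]
  calc ∏ i ∈ range n, ‖1 - Q ^ (i + 1)‖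
      ≤ ∏ i ∈ range n, Real.exp (R ^ (i + 1)) := by
        apply Finset.prod_le_prod (fun i _ => norm_nonneg _)
        intro i _
        calc ‖1 - Q ^ (i + 1)‖ ≤ ‖(1:ℂ)‖ + ‖Q ^ (i + 1)‖ := norm_sub_le _ _
          _ = 1 + R ^ (i + 1) := by rw [norm_one, norm_pow]
          _ ≤ Real.exp (R ^ (i + 1)) := by
              have := Real.add_one_le_exp (R ^ (i + 1)); linarith
    _ = Real.exp (∑ i ∈ range n, R ^ (i + 1)) := by rw [Real.exp_sum]
    _ ≤ Real.exp (R / (1 - R)) := Real.exp_le_exp.2 (geo_partial_le h0 hQ n)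

lemma P_norm_ge (hQ : ‖Q‖ < 1) (n : ℕ) :
    Real.exp (-(‖Q‖ / ((1 - ‖Q‖) * (1 - ‖Q‖)))) ≤ ‖P Q n‖ := by
  set R := ‖Q‖
  have h0 : 0 ≤ R := norm_nonneg Q
  rw [P, norm_prod]
  calc Real.exp (-(R / ((1 - R) * (1 - R))))
      ≤ Real.exp (-(∑ i ∈ range n, R ^ (i + 1)) / (1 - R)) := by
        apply Real.exp_le_exp.2
        rw [neg_div]
        apply neg_le_neg
        rw [div_le_div_iff₀ (by linarith) (mul_pos (by linarith) (by linarith))]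
        calc (∑ i ∈ range n, R ^ (i + 1)) * ((1 - R) * (1 - R))
            ≤ (R / (1 - R)) * ((1 - R) * (1 - R)) := by
              apply mul_le_mul_of_nonneg_right (geo_partial_le h0 hQ n)
              nlinarith
          _ = R * (1 - R) := by
              rw [div_mul_eq_mul_div, mul_div_assoc, mul_div_assoc,
                div_self (by linarith : (1:ℝ) - R ≠ 0), mul_one]
    _ = ∏ i ∈ range n, Real.exp (-(R ^ (i + 1) / (1 - R))) := by
        rw [← Real.exp_sum]
        congr 1
        rw [neg_div, Finset.sum_div]
        rw [← Finset.sum_neg_distrib]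
    _ ≤ ∏ i ∈ range n, ‖1 - Q ^ (i + 1)‖ := by
        apply Finset.prod_le_prod (fun i _ => (Real.exp_pos _).le)
        intro i _
        calc Real.exp (-(R ^ (i + 1) / (1 - R)))
            ≤ 1 - R ^ (i + 1) :=
              exp_bound_one_sub hQ (pow_nonneg h0 _)
                (pow_le_of_le_one h0 hQ.le (by omega))
          _ ≤ ‖1 - Q ^ (i + 1)‖ := by
              have := norm_sub_norm_le (1 : ℂ) (Q ^ (i + 1))
              rw [norm_one, norm_pow] at this
              linarith

/-- Uniform bound for the Gaussian binomials. -/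
noncomputable def D0 (Q : ℂ) : ℝ :=
  Real.exp (‖Q‖ / (1 - ‖Q‖)) /
    (Real.exp (-(‖Q‖ / ((1 - ‖Q‖) * (1 - ‖Q‖)))) *
      Real.exp (-(‖Q‖ / ((1 - ‖Q‖) * (1 - ‖Q‖)))))

lemma D0_pos (Q : ℂ) : 0 < D0 Q := by
  rw [D0]; positivity

lemma GB_norm_le (hQ : ‖Q‖ < 1) (m k : ℕ) : ‖GB Q m k‖ ≤ D0 Q := by
  have hρ : (0:ℝ) < Real.exp (-(‖Q‖ / ((1 - ‖Q‖) * (1 - ‖Q‖)))) := Real.exp_pos _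
  rw [GB]
  split_ifs with h
  · rw [norm_div, norm_mul, D0]
    apply div_le_div₀ (Real.exp_pos _).le (P_norm_le hQ m) (by positivity)
    exact mul_le_mul (P_norm_ge hQ k) (P_norm_ge hQ (m - k)) hρ.le (norm_nonneg _)
  · rw [norm_zero]
    exact (D0_pos Q).le

end Bounds

section Limits

/-- The double-indexed summand for dominated convergence. -/
noncomputable def fN (q : ℂ) (N : ℕ) (j : ℤ) : ℂ :=
  if j.natAbs ≤ N then GB (q ^ 4) (2 * N) (j + N).toNat * q ^ (2 * j ^ 2 - j) else 0

lemma natAbs_le_exp (j : ℤ) : (j.natAbs : ℤ) ≤ 2 * j ^ 2 - j := by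
  rcases lt_trichotomy j 0 with h | h | h
  · have : (j.natAbs : ℤ) = -j := by omega
    rw [this]; nlinarith [sq_nonneg j]
  · simp [h]
  · have : (j.natAbs : ℤ) = j := by omega
    rw [this]
    nlinarith [mul_le_mul_of_nonneg_left (show (1:ℤ) ≤ j by omega)
      (show (0:ℤ) ≤ 2 * j by omega)]

lemma fN_norm_le (hq : ‖q‖ < 1) (hq0 : q ≠ 0) (N : ℕ) (j : ℤ) :
    ‖fN q N j‖ ≤ D0 (q ^ 4) * ‖q‖ ^ j.natAbs := by
  have hr0 : (0:ℝ) < ‖q‖ := norm_pos_iff.2 hq0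
  have hQ : ‖(q:ℂ) ^ 4‖ < 1 := by
    rw [norm_pow]; exact pow_lt_one₀ (norm_nonneg q) hq (by norm_num)
  rw [fN]
  split_ifs with h
  · rw [norm_mul]
    apply mul_le_mul (GB_norm_le hQ _ _) _ (norm_nonneg _)
      (le_trans (norm_nonneg _) (GB_norm_le hQ (2 * N) (j + N).toNat))
    rw [norm_zpow]
    calc ‖q‖ ^ (2 * j ^ 2 - j) ≤ ‖q‖ ^ ((j.natAbs : ℤ)) :=
          zpow_le_zpow_right_of_le_one₀ hr0 hq.le (natAbs_le_exp j)
      _ = ‖q‖ ^ j.natAbs := zpow_natCast _ _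
  · rw [norm_zero]
    exact mul_nonneg (D0_pos _).le (by positivity)

lemma summable_bound (hq : ‖q‖ < 1) :
    Summable fun j : ℤ => D0 (q ^ 4) * ‖q‖ ^ j.natAbs := by
  apply Summable.mul_left
  apply Summable.of_nat_of_neg_add_one
  · simpa using summable_geometric_of_lt_one (norm_nonneg q) hq
  · have : ∀ n : ℕ, ‖q‖ ^ (-(n+1) : ℤ).natAbs = ‖q‖ * ‖q‖ ^ n := by
      intro n
      have : (-(n+1) : ℤ).natAbs = n + 1 := by omega
      rw [this, pow_succ']
    rw [funext this]
    exact (summable_geometric_of_lt_one (norm_nonneg q) hq).mul_left _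

lemma tendsto_nat_aux (j : ℤ) : Tendsto (fun N : ℕ => (j + (N : ℤ)).toNat) atTop atTop := by
  apply tendsto_atTop_atTop.2
  intro b
  exact ⟨b + j.natAbs, fun n hn => by omega⟩

lemma tendsto_two_mul : Tendsto (fun N : ℕ => 2 * N) atTop atTop := by
  apply tendsto_atTop_atTop.2
  intro b
  exact ⟨b, fun n hn => by omega⟩

lemma GB_tendsto (hQ : ‖Q‖ < 1) (j : ℤ) :
    Tendsto (fun N : ℕ => GB Q (2 * N) ((j : ℤ) + N).toNat) atTop
      (𝓝 (∏' n : ℕ, (1 - Q ^ (n + 1)))⁻¹) := by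
  have hprod : HasProd (fun n : ℕ => 1 - Q ^ (n + 1)) (∏' n : ℕ, (1 - Q ^ (n + 1))) ∧
      (∏' n : ℕ, (1 - Q ^ (n + 1))) ≠ 0 := by
    have h := hasProd_pm (q := Q) hQ (c := 1) (d := 1) one_pos one_pos (-1) (by simp)
    have he : (fun n : ℕ => 1 + (-1) * Q ^ (1 * n + 1)) = fun n : ℕ => 1 - Q ^ (n + 1) := by
      funext n; ring_nf
    rwa [he] at h
  set C := ∏' n : ℕ, (1 - Q ^ (n + 1)) with hC
  obtain ⟨hpC, hC0⟩ := hprod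
  have hPlim : Tendsto (fun n : ℕ => P Q n) atTop (𝓝 C) := hpC.tendsto_prod_nat
  have t1 : Tendsto (fun N : ℕ => P Q (2 * N)) atTop (𝓝 C) := hPlim.comp tendsto_two_mul
  have t2 : Tendsto (fun N : ℕ => P Q ((j + (N : ℤ)).toNat)) atTop (𝓝 C) :=
    hPlim.comp (tendsto_nat_aux j)
  have t3 : Tendsto (fun N : ℕ => P Q ((-j + (N : ℤ)).toNat)) atTop (𝓝 C) :=
    hPlim.comp (tendsto_nat_aux (-j))
  have tq : Tendsto (fun N : ℕ =>
      P Q (2 * N) / (P Q ((j + (N : ℤ)).toNat) * P Q ((-j + (N : ℤ)).toNat)))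
      atTop (𝓝 (C / (C * C))) := t1.div (t2.mul t3) (by simp [hC0])
  have hCC : C / (C * C) = C⁻¹ := by
    field_simp
  rw [hCC] at tq
  apply tq.congr'
  filter_upwards [eventually_ge_atTop j.natAbs] with N hN
  rw [GB, if_pos (show (j + (N : ℤ)).toNat ≤ 2 * N by omega),
    show 2 * N - (j + (N : ℤ)).toNat = (-j + (N : ℤ)).toNat by omega]

lemma fN_tendsto (hq : ‖q‖ < 1) (j : ℤ) :
    Tendsto (fun N : ℕ => fN q N j) atTop
      (𝓝 ((∏' n : ℕ, (1 - (q ^ 4) ^ (n + 1)))⁻¹ * q ^ (2 * j ^ 2 - j))) := by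
  have hQ : ‖(q:ℂ) ^ 4‖ < 1 := by
    rw [norm_pow]; exact pow_lt_one₀ (norm_nonneg q) hq (by norm_num)
  have := (GB_tendsto hQ j).mul_const (q ^ (2 * j ^ 2 - j) : ℂ)
  apply this.congr'
  filter_upwards [eventually_ge_atTop j.natAbs] with N hN
  rw [fN, if_pos hN]

end Limits

/-- The key identity  `S = C * T`. -/
theorem S_eq (hq : ‖q‖ < 1) (hq0 : q ≠ 0) :
    (∑' j : ℤ, q ^ (2 * j ^ 2 - j)) =
      (∏' n : ℕ, (1 - (q ^ 4) ^ (n + 1))) *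
        ((∏' n : ℕ, (1 + q ^ (4 * n + 1))) * (∏' n : ℕ, (1 + q ^ (4 * n + 3)))) := by
  have hQ : ‖(q:ℂ) ^ 4‖ < 1 := by
    rw [norm_pow]; exact pow_lt_one₀ (norm_nonneg q) hq (by norm_num)
  -- C and its nonvanishing
  have hCprod : HasProd (fun n : ℕ => 1 - (q ^ 4) ^ (n + 1))
      (∏' n : ℕ, (1 - (q ^ 4) ^ (n + 1))) ∧
      (∏' n : ℕ, (1 - (q ^ 4) ^ (n + 1))) ≠ 0 := by
    have h := hasProd_pm (q := q ^ 4) hQ (c := 1) (d := 1) one_pos one_pos (-1) (by simp)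
    have he : (fun n : ℕ => 1 + (-1) * (q ^ 4) ^ (1 * n + 1)) =
        fun n : ℕ => 1 - (q ^ 4) ^ (n + 1) := by
      funext n; ring_nf
    rwa [he] at h
  set C := ∏' n : ℕ, (1 - (q ^ 4) ^ (n + 1)) with hCdef
  obtain ⟨hpC, hC0⟩ := hCprod
  -- A and B
  have hA := hasProd_pm (q := q) hq (c := 4) (d := 1) (by norm_num) one_pos 1 (by simp)
  have hB := hasProd_pm (q := q) hq (c := 4) (d := 3) (by norm_num) (by norm_num) 1 (by simp)
  simp only [one_mul] at hA hB
  set A := ∏' n : ℕ, (1 + q ^ (4 * n + 1)) with hAdef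
  set B := ∏' n : ℕ, (1 + q ^ (4 * n + 3)) with hBdef
  -- limit of LHS products
  have hTlim : Tendsto (fun N => ∏ i ∈ range N, ((1 + q ^ (4 * i + 1)) * (1 + q ^ (4 * i + 3))))
      atTop (𝓝 (A * B)) := (hA.1.mul hB.1).tendsto_prod_nat
  -- limit of RHS sums via dominated convergence
  have hSlim : Tendsto (fun N => ∑' j : ℤ, fN q N j) atTop
      (𝓝 (∑' j : ℤ, C⁻¹ * q ^ (2 * j ^ 2 - j))) := by
    apply tendsto_tsum_of_dominated_convergence (summable_bound hq)
      (fun j => fN_tendsto hq j)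
    filter_upwards with N
    exact fun j => fN_norm_le hq hq0 N j
  -- identify the finite sums with the tsums
  have hsum_eq : ∀ N : ℕ, (∑' j : ℤ, fN q N j) =
      ∑ k ∈ range (2 * N + 1), GB (q ^ 4) (2 * N) k * q ^ (E N k) := by
    intro N
    have emb : Function.Injective (fun k : ℕ => (k : ℤ) - N) := by
      intro a b h; dsimp only at h; omega
    rw [tsum_eq_sum (s := (range (2 * N + 1)).map ⟨fun k : ℕ => (k : ℤ) - N, emb⟩)
      (by
        intro b hb
        have hb' : ¬ b.natAbs ≤ N := by
          intro hcon
          apply hb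
          refine Finset.mem_map.mpr ⟨(b + N).toNat, Finset.mem_range.mpr (by omega), ?_⟩
          simp only [Function.Embedding.coeFn_mk]
          omega
        rw [fN, if_neg hb'])]
    rw [Finset.sum_map]
    refine Finset.sum_congr rfl fun k hk => ?_
    rw [Finset.mem_range] at hk
    simp only [Function.Embedding.coeFn_mk]
    rw [fN, if_pos (by omega)]
    congr 1
    · congr 1
      omega
    · rw [← E_cast N k, zpow_natCast]
  have hTlim2 : Tendsto (fun N => ∏ i ∈ range N, ((1 + q ^ (4 * i + 1)) * (1 + q ^ (4 * i + 3))))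
      atTop (𝓝 (∑' j : ℤ, C⁻¹ * q ^ (2 * j ^ 2 - j))) := by
    apply hSlim.congr
    intro N
    rw [hsum_eq N, finite_gauss hq hq0 N]
  have hkey : A * B = ∑' j : ℤ, C⁻¹ * q ^ (2 * j ^ 2 - j) :=
    tendsto_nhds_unique hTlim hTlim2
  rw [tsum_mul_left] at hkey
  rw [hkey, ← mul_assoc, mul_inv_cancel₀ hC0, one_mul]

theorem main_ne_zero {q : ℂ} (hq : ‖q‖ < 1) (hq0 : q ≠ 0) :
    (∑' n : ℤ, q ^ (2 * n ^ 2 - n)) =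
      ∏' n : ℕ, (1 - q ^ (2 * (n + 1))) ^ 2 / (1 - q ^ (n + 1)) := by
  -- basic HasProd facts
  have hA' := hasProd_pm hq (by norm_num : (0:ℕ) < 4) (by norm_num : (0:ℕ) < 1) 1 (by simp)
  have hB' := hasProd_pm hq (by norm_num : (0:ℕ) < 4) (by norm_num : (0:ℕ) < 3) 1 (by simp)
  have h2m' := hasProd_pm hq (by norm_num : (0:ℕ) < 2) (by norm_num : (0:ℕ) < 2) (-1) (by simp)
  have h2p' := hasProd_pm hq (by norm_num : (0:ℕ) < 2) (by norm_num : (0:ℕ) < 2) 1 (by simp)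
  have hQ4 : ‖(q:ℂ) ^ 4‖ < 1 := by
    rw [norm_pow]; exact pow_lt_one₀ (norm_nonneg q) hq (by norm_num)
  have hC' := hasProd_pm hQ4 (by norm_num : (0:ℕ) < 1) (by norm_num : (0:ℕ) < 1) (-1) (by simp)
  -- names
  have hA : HasProd (fun n : ℕ => 1 + q ^ (4 * n + 1)) (∏' n : ℕ, (1 + q ^ (4 * n + 1))) := by
    have he : (fun n : ℕ => 1 + (1:ℂ) * q ^ (4 * n + 1)) = fun n => 1 + q ^ (4 * n + 1) := by
      funext n; ring
    have := hA'.1; rwa [he] at this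
  have hB : HasProd (fun n : ℕ => 1 + q ^ (4 * n + 3)) (∏' n : ℕ, (1 + q ^ (4 * n + 3))) := by
    have he : (fun n : ℕ => 1 + (1:ℂ) * q ^ (4 * n + 3)) = fun n => 1 + q ^ (4 * n + 3) := by
      funext n; ring
    have := hB'.1; rwa [he] at this
  have h2m : HasProd (fun n : ℕ => 1 - q ^ (2 * n + 2)) (∏' n : ℕ, (1 - q ^ (2 * n + 2))) := by
    have he : (fun n : ℕ => 1 + (-1:ℂ) * q ^ (2 * n + 2)) = fun n => 1 - q ^ (2 * n + 2) := by
      funext n; ring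
    have := h2m'.1; rwa [he] at this
  have h2p : HasProd (fun n : ℕ => 1 + q ^ (2 * n + 2)) (∏' n : ℕ, (1 + q ^ (2 * n + 2))) := by
    have he : (fun n : ℕ => 1 + (1:ℂ) * q ^ (2 * n + 2)) = fun n => 1 + q ^ (2 * n + 2) := by
      funext n; ring
    have := h2p'.1; rwa [he] at this
  have hC : HasProd (fun n : ℕ => 1 - (q ^ 4) ^ (n + 1)) (∏' n : ℕ, (1 - (q ^ 4) ^ (n + 1))) := by
    have he : (fun n : ℕ => 1 + (-1:ℂ) * (q ^ 4) ^ (1 * n + 1)) = fun n => 1 - (q ^ 4) ^ (n + 1) := by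
      funext n; ring_nf
    have := hC'.1; rwa [he] at this
  set A := ∏' n : ℕ, (1 + q ^ (4 * n + 1))
  set B := ∏' n : ℕ, (1 + q ^ (4 * n + 3))
  set C := ∏' n : ℕ, (1 - (q ^ 4) ^ (n + 1))
  set C2 := ∏' n : ℕ, (1 - q ^ (2 * n + 2))
  set C3 := ∏' n : ℕ, (1 + q ^ (2 * n + 2))
  -- odd part: HasProd (1 + q^(2n+1)) (A * B)
  have h1 : HasProd (fun n : ℕ => 1 + q ^ (2 * n + 1)) (A * B) := by
    apply HasProd.even_mul_odd (f := fun n : ℕ => 1 + q ^ (2 * n + 1))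
    · have he : (fun k : ℕ => 1 + q ^ (4 * k + 1)) =
          fun k : ℕ => 1 + q ^ (2 * (2 * k) + 1) := by
        funext k; congr 2; omega
      rwa [he] at hA
    · have he : (fun k : ℕ => 1 + q ^ (4 * k + 3)) =
          fun k : ℕ => 1 + q ^ (2 * (2 * k + 1) + 1) := by
        funext k; congr 2; omega
      rwa [he] at hB
  -- even pairing: (1-q^(2n+2))(1+q^(2n+2)) = 1-(q^4)^(n+1)
  have h4 : HasProd (fun n : ℕ => 1 - (q ^ 4) ^ (n + 1)) (C2 * C3) := by
    have := h2m.mul h2p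
    have he : (fun n : ℕ => (1 - q ^ (2 * n + 2)) * (1 + q ^ (2 * n + 2))) =
        fun n : ℕ => 1 - (q ^ 4) ^ (n + 1) := by
      funext n
      have hb : (q ^ 4) ^ (n + 1) = q ^ (2 * n + 2) * q ^ (2 * n + 2) := by
        rw [← pow_add, ← pow_mul]
        congr 1
        omega
      rw [hb]; ring
    rwa [he] at this
  have hCC : C2 * C3 = C := h4.unique hC
  -- full product of (1 + q^(n+1))
  have h5 : HasProd (fun n : ℕ => 1 + q ^ (n + 1)) (A * B * C3) := by
    apply HasProd.even_mul_odd (f := fun n : ℕ => 1 + q ^ (n + 1))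
    · have he : (fun k : ℕ => 1 + q ^ (2 * k + 1)) =
          fun k : ℕ => 1 + q ^ (2 * k + 1) := rfl
      exact h1
    · have he : (fun k : ℕ => 1 + q ^ (2 * k + 2)) =
          fun k : ℕ => 1 + q ^ (2 * k + 1 + 1) := by
        funext k; congr 2
      rwa [he] at h2p
      -- note: h2p's function is 1 + q^(2k+2); target 1 + q^(2k+1+1)
  -- final HasProd for the goal integrand
  have h6 : HasProd (fun n : ℕ => (1 - q ^ (2 * (n + 1))) ^ 2 / (1 - q ^ (n + 1)))
      (C * (A * B)) := by
    have := h2m.mul h5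
    have he : (fun n : ℕ => (1 - q ^ (2 * n + 2)) * (1 + q ^ (n + 1))) =
        fun n : ℕ => (1 - q ^ (2 * (n + 1))) ^ 2 / (1 - q ^ (n + 1)) := by
      funext n
      have hne := one_sub_pow_ne hq n
      have hsq : q ^ (2 * (n + 1)) = (q ^ (n + 1)) ^ 2 := by
        rw [← pow_mul]; congr 1; omega
      have hsq' : q ^ (2 * n + 2) = (q ^ (n + 1)) ^ 2 := by
        rw [← pow_mul]; congr 1; omega
      rw [hsq, hsq']
      field_simp
      ring
    have hval : C2 * (A * B * C3) = C * (A * B) := by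
      rw [← hCC]; ring
    rw [he, hval] at this
    exact this
  rw [h6.tprod_eq]
  rw [S_eq hq hq0]

theorem main_zero :
    (∑' n : ℤ, (0:ℂ) ^ (2 * n ^ 2 - n)) =
      ∏' n : ℕ, (1 - (0:ℂ) ^ (2 * (n + 1))) ^ 2 / (1 - (0:ℂ) ^ (n + 1)) := by
  have hL : (∑' n : ℤ, (0:ℂ) ^ (2 * n ^ 2 - n)) = 1 := by
    rw [tsum_eq_single (0 : ℤ)]
    · norm_num
    · intro b hb
      apply zero_zpow
      intro h
      have h2 : b * (2 * b - 1) = 0 := by linear_combination h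
      rcases mul_eq_zero.1 h2 with h3 | h3 <;> omega
  have hR : (∏' n : ℕ, (1 - (0:ℂ) ^ (2 * (n + 1))) ^ 2 / (1 - (0:ℂ) ^ (n + 1))) = 1 := by
    have he : (fun n : ℕ => (1 - (0:ℂ) ^ (2 * (n + 1))) ^ 2 / (1 - (0:ℂ) ^ (n + 1))) =
        fun _ : ℕ => (1 : ℂ) := by
      funext n
      rw [zero_pow (by omega : 2 * (n + 1) ≠ 0), zero_pow (by omega : n + 1 ≠ 0)]
      norm_num
    rw [he, tprod_one]
  rw [hL, hR]




end GaussAux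

/-- Gauss's identity: for `|q| < 1`,
`∑_{n∈ℤ} q^{2n²-n} = ∏_{n≥1} (1-q^{2n})²/(1-q^n)`. -/
theorem stmt_9 (q : ℂ) (hq : ‖q‖ < 1) :
    (∑' n : ℤ, q ^ (2 * n ^ 2 - n)) =
      ∏' n : ℕ, (1 - q ^ (2 * (n + 1))) ^ 2 / (1 - q ^ (n + 1)) := by
  rcases eq_or_ne q 0 with rfl | hq0
  · exact GaussAux.main_zero
  · exact GaussAux.main_ne_zero hq hq0
end

section
/- Let l ≥ 2, let {e_1,…,e_l} be the standard orthonormal basis of ℝ^l with inner product (·|·), and let Δ be the root system of type C_l consisting of the short roots ±(e_i−e_j)/√2 and ±(e_i+e_j)/√2 for 1 ≤ i < j ≤ l and the long roots ±√2·e_i for 1 ≤ i ≤ l. Let α_1 = (e_1−e_2)/√2, …, α_{l−1} = (e_{l−1}−e_l)/√2, α_l = √2·e_l be the simple roots; they form a basis of ℝ^l, and every root α has unique integer coordinates α = ∑_{i=1}^l k_i α_i. For k ∈ ℤ let ρ(k) ∈ {0,1} with ρ(k) ≡ k (mod 2), and define p(α) = ∑_{i=1}^{l−1} ρ(k_i)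 α_i and s(α) = ∑_{i=1}^{l−1} (k_i − ρ(k_i)) α_i. Suppose α and β are short roots such that α + β is a long root. Then (α|β) = 0, p(α) = p(β), and s(α+β) − s(α) − s(β) = 2·p(α). -/
open scoped BigOperators RealInnerProductSpace

/-- The standard orthonormal basis vector `e_i` of `ℝ^l`. -/
noncomputable def Ce (l : ℕ) (i : Fin l) : EuclideanSpace ℝ (Fin l) :=
  EuclideanSpace.single i 1

/-- The short roots `±(e_i - e_j)/√2`, `±(e_i + e_j)/√2` for `i < j`, of type `C_l`. -/
noncomputable def CshortRoots (l : ℕ) : Set (EuclideanSpace ℝ (Fin l)) :=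
  {x | ∃ i j : Fin l, i < j ∧
    (x = (Real.sqrt 2)⁻¹ • (Ce l i - Ce l j) ∨ x = -((Real.sqrt 2)⁻¹ • (Ce l i - Ce l j)) ∨
     x = (Real.sqrt 2)⁻¹ • (Ce l i + Ce l j) ∨ x = -((Real.sqrt 2)⁻¹ • (Ce l i + Ce l j)))}

/-- The long roots `±√2·e_i` of type `C_l`. -/
noncomputable def ClongRoots (l : ℕ) : Set (EuclideanSpace ℝ (Fin l)) :=
  {x | ∃ i : Fin l, x = Real.sqrt 2 • Ce l i ∨ x = -(Real.sqrt 2 • Ce l i)}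

/-- The root system of type `C_l`. -/
noncomputable def Croots (l : ℕ) : Set (EuclideanSpace ℝ (Fin l)) :=
  CshortRoots l ∪ ClongRoots l

/-- The simple roots: `α_i = (e_i - e_{i+1})/√2` for `i < l-1`, and `α_l = √2·e_l`. -/
noncomputable def Csimple (l : ℕ) (i : Fin l) : EuclideanSpace ℝ (Fin l) :=
  if h : (i : ℕ) + 1 < l then (Real.sqrt 2)⁻¹ • (Ce l i - Ce l ⟨(i : ℕ) + 1, h⟩)
  else Real.sqrt 2 • Ce l i

/-- `Ccoords l α k` says `k` is the coordinate vector of `α` in the simple root basis: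
`α = ∑ k_i • α_i`. -/
noncomputable def Ccoords (l : ℕ) (α : EuclideanSpace ℝ (Fin l)) (k : Fin l → ℤ) : Prop :=
  α = ∑ i : Fin l, (k i : ℝ) • Csimple l i

/-- `p(α) = ∑_{i=1}^{l-1} ρ(k_i)·α_i`, computed from the coordinate vector `k` of `α`;
here `ρ(k) = k % 2 ∈ {0,1}` with `ρ(k) ≡ k (mod 2)`. -/
noncomputable def Cp (l : ℕ) (k : Fin l → ℤ) : EuclideanSpace ℝ (Fin l) :=
  ∑ i : Fin l, (if (i : ℕ) + 1 < l then ((k i % 2 : ℤ) : ℝ) else 0) • Csimple l i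

/-- `s(α) = ∑_{i=1}^{l-1} (k_i - ρ(k_i))·α_i`, computed from the coordinate vector `k`. -/
noncomputable def Cs (l : ℕ) (k : Fin l → ℤ) : EuclideanSpace ℝ (Fin l) :=
  ∑ i : Fin l, (if (i : ℕ) + 1 < l then ((k i - k i % 2 : ℤ) : ℝ) else 0) • Csimple l i


/-- weight of simple root `i` in partial sums -/
noncomputable def cwt (l : ℕ) (t : Fin l) : ℝ :=
  if (t:ℕ)+1 < l then (Real.sqrt 2)⁻¹ else Real.sqrt 2

lemma Ce_apply (l : ℕ) (i s : Fin l) : Ce l i s = if s = i then 1 else 0 := by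
  simp [Ce, EuclideanSpace.single_apply]

lemma csimple_partial (l : ℕ) (i t : Fin l) :
    ∑ s ∈ Finset.Iic t, Csimple l i s = if i = t then cwt l t else 0 := by
  unfold Csimple cwt
  by_cases h : (i:ℕ)+1 < l
  · rw [dif_pos h]
    have : ∀ s : Fin l, ((Real.sqrt 2)⁻¹ • (Ce l i - Ce l ⟨(i:ℕ)+1, h⟩)) s
        = (Real.sqrt 2)⁻¹ * ((if s = i then (1:ℝ) else 0) - (if s = ⟨(i:ℕ)+1, h⟩ then (1:ℝ) else 0)) := by
      intro s
      simp [Ce_apply]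
    simp only [this]
    rw [← Finset.mul_sum, Finset.sum_sub_distrib]
    rw [Finset.sum_ite_eq' (Finset.Iic t) i (fun _ => (1:ℝ)),
        Finset.sum_ite_eq' (Finset.Iic t) ⟨(i:ℕ)+1, h⟩ (fun _ => (1:ℝ))]
    simp only [Finset.mem_Iic]
    by_cases hit : i = t
    · subst hit
      have h2 : ¬ (⟨(i:ℕ)+1, h⟩ : Fin l) ≤ i := by
        simp [Fin.le_def]
      rw [if_pos le_rfl, if_neg h2, if_pos rfl, if_pos h]
      ring
    · rw [if_neg hit]
      by_cases hle : i ≤ t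
      · have : (⟨(i:ℕ)+1, h⟩ : Fin l) ≤ t := by
          rw [Fin.le_def, Fin.val_mk]
          have := Fin.lt_iff_val_lt_val.mp (lt_of_le_of_ne hle hit)
          omega
        rw [if_pos hle, if_pos this]; ring
      · have : ¬ (⟨(i:ℕ)+1, h⟩ : Fin l) ≤ t := by
          rw [Fin.le_def, Fin.val_mk] at *
          omega
        rw [if_neg hle, if_neg this]; ring
  · rw [dif_neg h]
    have : ∀ s : Fin l, (Real.sqrt 2 • Ce l i) s = Real.sqrt 2 * (if s = i then (1:ℝ) else 0) := by
      intro s; simp [Ce_apply]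
    simp only [this]
    rw [← Finset.mul_sum, Finset.sum_ite_eq' (Finset.Iic t) i (fun _ => (1:ℝ))]
    simp only [Finset.mem_Iic]
    have hi : (i:ℕ) = l - 1 := by have := i.isLt; omega
    by_cases hit : i = t
    · subst hit
      rw [if_pos le_rfl, if_pos rfl, if_neg h]; ring
    · have : ¬ i ≤ t := by
        intro hle
        exact hit (le_antisymm hle (by rw [Fin.le_def]; have := t.isLt; omega))
      rw [if_neg this, if_neg hit]; ring

lemma coords_partial (l : ℕ) (x : EuclideanSpace ℝ (Fin l)) (k : Fin l → ℤ)
    (h : Ccoords l x k) (t : Fin l) :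
    ∑ s ∈ Finset.Iic t, x s = (k t : ℝ) * cwt l t := by
  rw [Ccoords] at h
  subst h
  have happ : ∀ s : Fin l, (∑ i : Fin l, (k i : ℝ) • Csimple l i) s
      = ∑ i : Fin l, (k i : ℝ) * (Csimple l i s) := by
    intro s
    rw [WithLp.ofLp_sum, Finset.sum_apply]
    rfl
  simp only [happ]
  rw [Finset.sum_comm]
  simp only [← Finset.mul_sum, csimple_partial]
  rw [Finset.sum_eq_single t]
  · rw [if_pos rfl]
  · intro b _ hb
    rw [if_neg hb, mul_zero]
  · intro h; exact absurd (Finset.mem_univ t) h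

lemma cwt_ne (l : ℕ) (t : Fin l) : cwt l t ≠ 0 := by
  unfold cwt
  have : Real.sqrt 2 ≠ 0 := by positivity
  split <;> simp [this]

lemma coords_unique (l : ℕ) (x : EuclideanSpace ℝ (Fin l)) (k k' : Fin l → ℤ)
    (h : Ccoords l x k) (h' : Ccoords l x k') : k = k' := by
  funext t
  have := (coords_partial l x k h t).symm.trans (coords_partial l x k' h' t)
  have := mul_right_cancel₀ (cwt_ne l t) this
  exact_mod_cast this

lemma coords_add (l : ℕ) (x y : EuclideanSpace ℝ (Fin l)) (k k' : Fin l → ℤ)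
    (h : Ccoords l x k) (h' : Ccoords l y k') :
    Ccoords l (x + y) (fun i => k i + k' i) := by
  rw [Ccoords] at *
  subst h; subst h'
  rw [← Finset.sum_add_distrib]
  congr 1; funext i
  push_cast
  rw [add_smul]

lemma inner_Ce (l : ℕ) (i j : Fin l) :
    (inner ℝ (Ce l i) (Ce l j) : ℝ) = if i = j then 1 else 0 := by
  rw [Ce, Ce, EuclideanSpace.inner_single_left]
  simp [EuclideanSpace.single_apply, eq_comm]

lemma short_norm (l : ℕ) (x : EuclideanSpace ℝ (Fin l)) (hx : x ∈ CshortRoots l) :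
    ‖x‖^2 = 1 := by
  obtain ⟨i, j, hij, hc⟩ := hx
  have hne : i ≠ j := ne_of_lt hij
  have h2 : Real.sqrt 2 ^ 2 = 2 := Real.sq_sqrt (by norm_num)
  have h2pos : (0:ℝ) < Real.sqrt 2 := by positivity
  have hni : ‖Ce l i‖ = 1 := by rw [Ce]; simp [EuclideanSpace.norm_single]
  have hnj : ‖Ce l j‖ = 1 := by rw [Ce]; simp [EuclideanSpace.norm_single]
  have hin : (inner ℝ (Ce l i) (Ce l j) : ℝ) = 0 := by rw [inner_Ce, if_neg hne]
  have key1 : ‖Ce l i - Ce l j‖^2 = 2 := by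
    rw [norm_sub_sq_real, hni, hnj, hin]; ring
  have key2 : ‖Ce l i + Ce l j‖^2 = 2 := by
    rw [norm_add_sq_real, hni, hnj, hin]; ring
  rcases hc with h | h | h | h <;> rw [h] <;>
    simp only [norm_neg, norm_smul, mul_pow, norm_inv, Real.norm_eq_abs,
      abs_of_pos h2pos, key1, key2] <;>
    rw [inv_pow, h2] <;> norm_num

lemma long_norm (l : ℕ) (x : EuclideanSpace ℝ (Fin l)) (hx : x ∈ ClongRoots l) :
    ‖x‖^2 = 2 := by
  obtain ⟨i, hc⟩ := hx
  have h2 : Real.sqrt 2 ^ 2 = 2 := Real.sq_sqrt (by norm_num)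
  have h2pos : (0:ℝ) < Real.sqrt 2 := by positivity
  have hni : ‖Ce l i‖ = 1 := by rw [Ce]; simp [EuclideanSpace.norm_single]
  rcases hc with h | h <;> rw [h] <;>
    simp only [norm_neg, norm_smul, mul_pow, Real.norm_eq_abs, abs_of_pos h2pos, hni, h2] <;>
    norm_num

lemma long_even (l : ℕ) (x : EuclideanSpace ℝ (Fin l)) (k : Fin l → ℤ)
    (hx : x ∈ ClongRoots l) (hk : Ccoords l x k) (t : Fin l) (ht : (t:ℕ)+1 < l) :
    k t % 2 = 0 := by
  obtain ⟨m, hc⟩ := hx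
  have hs2 : Real.sqrt 2 ≠ 0 := by positivity
  have hss : Real.sqrt 2 * Real.sqrt 2 = 2 := Real.mul_self_sqrt (by norm_num)
  have hp := coords_partial l x k hk t
  rw [cwt, if_pos ht] at hp
  have hsum : ∀ (c : ℝ), (∀ s : Fin l, x s = c * (if s = m then 1 else 0)) →
      ∑ s ∈ Finset.Iic t, x s = if m ≤ t then c else 0 := by
    intro c hc'
    simp only [hc', mul_ite, mul_one, mul_zero]
    rw [Finset.sum_ite_eq' (Finset.Iic t) m (fun _ => c)]
    simp only [Finset.mem_Iic]
  obtain ⟨c, hx', hcc⟩ : ∃ c : ℝ, (∀ s : Fin l, x s = c * (if s = m then 1 else 0)) ∧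
      (c * Real.sqrt 2 = 2 ∨ c * Real.sqrt 2 = -2) := by
    rcases hc with h | h
    · refine ⟨Real.sqrt 2, fun s => ?_, Or.inl hss⟩
      have hxs : x s = Real.sqrt 2 * (Ce l m s) := by rw [h]; rfl
      rw [hxs, Ce_apply]
    · refine ⟨-Real.sqrt 2, fun s => ?_, Or.inr (by rw [neg_mul, hss])⟩
      have hxs : x s = -(Real.sqrt 2 * (Ce l m s)) := by rw [h]; rfl
      rw [hxs, Ce_apply]
      ring
  have hkr : (k t : ℝ) = if m ≤ t then c * Real.sqrt 2 else 0 := by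
    have e1 : (k t : ℝ) = ((k t : ℝ) * (Real.sqrt 2)⁻¹) * Real.sqrt 2 := by
      rw [mul_assoc, inv_mul_cancel₀ hs2, mul_one]
    rw [e1, ← hp, hsum c hx']
    split
    · rfl
    · rw [zero_mul]
  by_cases hmt : m ≤ t
  · rw [if_pos hmt] at hkr
    rcases hcc with h | h <;> rw [h] at hkr
    · have : k t = 2 := by exact_mod_cast hkr
      omega
    · have : k t = -2 := by exact_mod_cast hkr
      omega
  · rw [if_neg hmt] at hkr
    have : k t = 0 := by exact_mod_cast hkr
    omega

/-- If `α`, `β` are short roots of `C_l` with `α + β` a long root, then `(α|β) = 0`,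
`p(α) = p(β)` and `s(α+β) - s(α) - s(β) = 2·p(α)`. -/
theorem stmt_15 (l : ℕ) (hl : 2 ≤ l) (α β : EuclideanSpace ℝ (Fin l))
    (hα : α ∈ CshortRoots l) (hβ : β ∈ CshortRoots l) (hαβ : α + β ∈ ClongRoots l)
    (ka kb kc : Fin l → ℤ)
    (hka : Ccoords l α ka) (hkb : Ccoords l β kb) (hkc : Ccoords l (α + β) kc) :
    (inner ℝ α β : ℝ) = 0 ∧ Cp l ka = Cp l kb ∧
      Cs l kc - Cs l ka - Cs l kb = (2 : ℝ) • Cp l ka := by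
  have hksum : Ccoords l (α + β) (fun i => ka i + kb i) := coords_add l α β ka kb hka hkb
  have hkc' : kc = fun i => ka i + kb i := coords_unique l (α + β) kc _ hkc hksum
  have heven : ∀ t : Fin l, (t:ℕ)+1 < l → kc t % 2 = 0 := fun t ht =>
    long_even l (α + β) kc hαβ hkc t ht
  have hadd : ∀ t : Fin l, kc t = ka t + kb t := fun t => by rw [hkc']
  have hpar : ∀ t : Fin l, (t:ℕ)+1 < l → ka t % 2 = kb t % 2 := by
    intro t ht
    have h1 := heven t ht
    have h2 := hadd t
    omega
  refine ⟨?_, ?_, ?_⟩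
  · have h1 := short_norm l α hα
    have h2 := short_norm l β hβ
    have h3 := long_norm l (α + β) hαβ
    have h4 : ‖α + β‖^2 = ‖α‖^2 + 2*(inner ℝ α β : ℝ) + ‖β‖^2 := norm_add_sq_real α β
    linarith
  · unfold Cp
    refine Finset.sum_congr rfl fun i _ => ?_
    by_cases h : (i:ℕ)+1 < l
    · rw [if_pos h, if_pos h, hpar i h]
    · rw [if_neg h, if_neg h]
  · unfold Cs Cp
    rw [Finset.smul_sum, ← Finset.sum_sub_distrib, ← Finset.sum_sub_distrib]
    refine Finset.sum_congr rfl fun i _ => ?_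
    by_cases h : (i:ℕ)+1 < l
    · simp only [if_pos h]
      rw [← sub_smul, ← sub_smul, smul_smul]
      congr 1
      have hint : (kc i - kc i % 2) - (ka i - ka i % 2) - (kb i - kb i % 2)
          = 2 * (ka i % 2) := by
        have h1 := heven i h
        have h2 := hadd i
        have h3 := hpar i h
        omega
      exact_mod_cast hint
    · simp only [if_neg h]
      simp
end
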